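/- arXiv:1901.09278 — 10 statements merged into one kernel-verified Lean document; each statement's English description precedes it below -/
import Mathlib

section
/- Let n, k, s, p, r be integers with 0 < r ≤ p ≤ s+r−2 and r ≤ k, and set q = (k−r)s+p. If F ⊆ C([n],k) is shifted and has property U(s,q), then F ⊆ ⋃_{i=0}^{k−r} A(p+is, r+i, n, k); in particular every F ∈ F satisfies |F ∩ [p+is]| ≥ r+i for some 0 ≤ i ≤ k−r. -/
open Finset
open scoped Classical

/-- `F` has property `U(s,q)`: any `s` (not necessarily distinct) members have union of size `≤ q`. -/
def propU (F : Finset (Finset ℕ)) (s q : ℕ) : Prop :=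
  ∀ G : Fin s → Finset ℕ, (∀ i, G i ∈ F) → (Finset.univ.sup G).card ≤ q

/-- `A(p,r,n,k)`: the `k`-subsets of `[n] = {1,…,n}` meeting `[p]` in at least `r` elements. -/
def famA (p r n k : ℕ) : Finset (Finset ℕ) :=
  (Finset.powersetCard k (Finset.Icc 1 n)).filter fun A => r ≤ (A ∩ Finset.Icc 1 p).card

/-- `G ≼ F`: comparing the increasing enumerations elementwise. -/
def shiftLE (G F : Finset ℕ) : Prop :=
  List.Forall₂ (· ≤ ·) (G.sort (· ≤ ·)) (F.sort (· ≤ ·))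

/-- `F ⊆ C([n],k)` is shifted. -/
def IsShifted (n k : ℕ) (F : Finset (Finset ℕ)) : Prop :=
  ∀ A ∈ F, ∀ G ∈ Finset.powersetCard k (Finset.Icc 1 n), shiftLE G A → G ∈ F

/-- `m(n,k,s,q)`: the maximum size of a family `F ⊆ C([n],k)` with property `U(s,q)`. -/
noncomputable def mMax (n k s q : ℕ) : ℕ :=
  ((Finset.powersetCard k (Finset.Icc 1 n)).powerset.filter fun F => propU F s q).sup
    Finset.card

/-- Proposition 1.5 of the paper. -/
theorem stmt3 (n k s p r q : ℕ) (hr : 0 < r) (hrp : r ≤ p) (hp : p ≤ s + r - 2)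
    (hrk : r ≤ k) (hq : q = (k - r) * s + p)
    (F : Finset (Finset ℕ)) (hF : F ⊆ Finset.powersetCard k (Finset.Icc 1 n))
    (hshift : IsShifted n k F) (hU : propU F s q) :
    ∀ A ∈ F, ∃ i ≤ k - r, A ∈ famA (p + i * s) (r + i) n k := by
  intro A hA
  by_contra hcon
  push_neg at hcon
  have hs2 : 2 ≤ s := by omega
  have hAC := hF hA
  rw [Finset.mem_powersetCard] at hAC
  obtain ⟨hAsub, hAcard⟩ := hAC
  -- card hypothesis from the negation
  have hcard : ∀ i ≤ k - r, (A ∩ Finset.Icc 1 (p + i * s)).card < r + i := by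
    intro i hi
    have h1 := hcon i hi
    rw [famA, Finset.mem_filter] at h1
    push_neg at h1
    exact h1 (Finset.mem_powersetCard.mpr ⟨hAsub, hAcard⟩)
  -- the increasing enumeration of A
  set aL := A.sort (· ≤ ·) with haL
  have hlen : aL.length = k := by rw [haL, Finset.length_sort, hAcard]
  set a : ℕ → ℕ := fun j => aL.getD j 0 with ha
  have hget : ∀ j (h : j < aL.length), aL.get ⟨j, h⟩ = a j := fun j h =>
    (List.getD_eq_get (d := 0) (i := ⟨j, h⟩)).symm
  have hamem : ∀ j < k, a j ∈ A := by
    intro j hj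
    have hj' : j < aL.length := by omega
    rw [← hget j hj']
    rw [← Finset.mem_sort (α := ℕ) (· ≤ ·)]
    exact List.get_mem _ _
  have haub : ∀ j < k, a j ≤ n := by
    intro j hj
    have := hAsub (hamem j hj)
    rw [Finset.mem_Icc] at this
    exact this.2
  have hmono : ∀ j1 j2, j1 < j2 → j2 < k → a j1 < a j2 := by
    intro j1 j2 h12 h2
    have h2' : j2 < aL.length := by omega
    have h1' : j1 < aL.length := by omega
    rw [← hget j1 h1', ← hget j2 h2']
    exact (Finset.sortedLT_sort A).strictMono_get h12
  have hlb : ∀ j, j < k → j + 1 ≤ a j := by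
    intro j
    induction j with
    | zero =>
      intro hj
      have := hAsub (hamem 0 hj)
      rw [Finset.mem_Icc] at this
      omega
    | succ m ih =>
      intro hj
      have h1 := ih (by omega)
      have h2 := hmono m (m + 1) (by omega) hj
      omega
  -- key: if |A ∩ [m]| ≤ j then a j > m
  have hkey : ∀ j m, j < k → (A ∩ Finset.Icc 1 m).card ≤ j → m < a j := by
    intro j m hj hc
    by_contra hm
    push_neg at hm
    have hsubS : (Finset.range (j + 1)).image a ⊆ A ∩ Finset.Icc 1 m := by
      intro x hx
      rw [Finset.mem_image] at hx
      obtain ⟨i, hi, rfl⟩ := hx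
      rw [Finset.mem_range] at hi
      have hik : i < k := by omega
      have hle : a i ≤ a j := by
        rcases Nat.lt_or_ge i j with h | h
        · exact le_of_lt (hmono i j h hj)
        · have : i = j := by omega
          subst this; exact le_refl _
      refine Finset.mem_inter.mpr ⟨hamem i hik, Finset.mem_Icc.mpr ⟨?_, by omega⟩⟩
      have := hlb i hik
      omega
    have hcardS : ((Finset.range (j + 1)).image a).card = j + 1 := by
      rw [Finset.card_image_of_injOn, Finset.card_range]
      intro i1 h1 i2 h2 he
      rw [Finset.mem_coe, Finset.mem_range] at h1 h2
      by_contra hne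
      rcases Nat.lt_or_ge i1 i2 with h | h
      · have := hmono i1 i2 h (by omega); omega
      · have : i2 < i1 := by omega
        have := hmono i2 i1 this (by omega); omega
    have := Finset.card_le_card hsubS
    omega
  -- lower bounds on tail elements of A
  have hAr : ∀ i ≤ k - r, p + i * s < a (r - 1 + i) := by
    intro i hi
    refine hkey (r - 1 + i) (p + i * s) (by omega) ?_
    have := hcard i hi
    omega
  -- the function generating the shifted sets
  set g : ℕ → ℕ → ℕ := fun t m =>
    if m < r - 1 then m + 1
    else if m = r - 1 then (if r + t ≤ p + 1 then r + t else p + 1)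
    else p + (m - r) * s + t + 2 with hg
  have hgmono : ∀ t, StrictMono (g t) := by
    intro t
    apply strictMono_nat_of_lt_succ
    intro m
    simp only [hg]
    rcases Nat.lt_or_ge (m + 1) (r - 1) with h1 | h1
    · rw [if_pos (show m < r - 1 by omega), if_pos (show m + 1 < r - 1 from h1)]
      omega
    · rcases Nat.lt_or_ge m (r - 1) with h2 | h2
      · have h3 : m + 1 = r - 1 := by omega
        rw [if_pos (show m < r - 1 from h2), if_neg (show ¬ m + 1 < r - 1 by omega),
          if_pos (show m + 1 = r - 1 from h3)]
        split_ifs <;> omega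
      · rcases Nat.eq_or_lt_of_le h2 with h3 | h3
        · rw [if_neg (show ¬ m < r - 1 by omega), if_pos (show m = r - 1 from h3.symm),
            if_neg (show ¬ m + 1 < r - 1 by omega), if_neg (show ¬ m + 1 = r - 1 by omega)]
          have h4 : m + 1 - r = 0 := by omega
          rw [h4]
          split_ifs <;> omega
        · have hmr : r ≤ m := by omega
          rw [if_neg (show ¬ m < r - 1 by omega), if_neg (show ¬ m = r - 1 by omega),
            if_neg (show ¬ m + 1 < r - 1 by omega), if_neg (show ¬ m + 1 = r - 1 by omega)]
          have he : (m + 1 - r) * s = (m - r) * s + s := by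
            have h5 : m + 1 - r = (m - r) + 1 := by omega
            rw [h5, Nat.succ_mul]
          omega
  have hgdom : ∀ t < s, ∀ m < k, g t m ≤ a m := by
    intro t ht m hm
    simp only [hg]
    rcases Nat.lt_or_ge m (r - 1) with h1 | h1
    · rw [if_pos (show m < r - 1 from h1)]
      exact hlb m hm
    · rcases Nat.eq_or_lt_of_le h1 with h2 | h2
      · have h0 := hAr 0 (by omega)
        simp only [Nat.zero_mul, Nat.add_zero] at h0
        rw [if_neg (show ¬ m < r - 1 by omega), if_pos (show m = r - 1 from h2.symm)]
        rw [← h2]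
        split_ifs <;> omega
      · have hmr : r ≤ m := by omega
        have hik : m - r + 1 ≤ k - r := by omega
        have h0 := hAr (m - r + 1) hik
        have hidx : r - 1 + (m - r + 1) = m := by omega
        rw [hidx] at h0
        have he : (m - r + 1) * s = (m - r) * s + s := Nat.succ_mul _ _
        rw [if_neg (show ¬ m < r - 1 by omega), if_neg (show ¬ m = r - 1 by omega)]
        omega
  have hg1 : ∀ t m, 1 ≤ g t m := by
    intro t m
    simp only [hg]
    split_ifs <;> omega
  -- the shifted sets
  set L : ℕ → List ℕ := fun t => (List.range k).map (g t) with hL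
  have hLlen : ∀ t, (L t).length = k := by
    intro t; simp [hL]
  have hLsorted : ∀ t, (L t).Pairwise (· < ·) := by
    intro t
    rw [hL, List.pairwise_map]
    exact (List.pairwise_lt_range (n := k)).imp (fun h => hgmono t h)
  have hLnodup : ∀ t, (L t).Nodup := fun t => (hLsorted t).nodup
  have hLsort : ∀ t, (L t).toFinset.sort (· ≤ ·) = L t := by
    intro t
    rw [List.toFinset_sort (r := (· ≤ ·)) (hLnodup t)]
    exact (hLsorted t).imp (fun h => le_of_lt h)
  have hLcard : ∀ t, (L t).toFinset.card = k := by
    intro t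
    rw [List.toFinset_card_of_nodup (hLnodup t), hLlen]
  have hLget : ∀ t m (h : m < (L t).length), (L t).get ⟨m, h⟩ = g t m := by
    intro t m h
    simp [hL]
  have hLshift : ∀ t < s, shiftLE (L t).toFinset A := by
    intro t ht
    rw [shiftLE, hLsort, ← haL]
    rw [List.forall₂_iff_get]
    refine ⟨by rw [hLlen, hlen], ?_⟩
    intro i h1 h2
    rw [hLget, hget]
    exact hgdom t ht i (by omega)
  have hLmem : ∀ t < s, (L t).toFinset ∈ Finset.powersetCard k (Finset.Icc 1 n) := by
    intro t ht
    rw [Finset.mem_powersetCard]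
    refine ⟨?_, hLcard t⟩
    intro x hx
    rw [List.mem_toFinset, hL, List.mem_map] at hx
    obtain ⟨m, hm, rfl⟩ := hx
    rw [List.mem_range] at hm
    rw [Finset.mem_Icc]
    exact ⟨hg1 t m, le_trans (hgdom t ht m hm) (haub m hm)⟩
  have hLF : ∀ t < s, (L t).toFinset ∈ F := by
    intro t ht
    exact hshift A hA _ (hLmem t ht) (hLshift t ht)
  -- apply property U
  set GG : Fin s → Finset ℕ := fun t => (L t.val).toFinset with hGG
  have hUapp := hU GG (fun t => hLF t.val t.isLt)
  -- the union covers [q+1]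
  have hcover : Finset.Icc 1 (q + 1) ⊆ Finset.univ.sup GG := by
    intro x hx
    rw [Finset.mem_Icc] at hx
    -- find t < s and m < k with g t m = x
    have hfind : ∃ t, ∃ ht : t < s, ∃ m, m < k ∧ g t m = x := by
      rcases Nat.lt_or_ge x r with h1 | h1
      · -- 1 ≤ x ≤ r - 1
        refine ⟨0, by omega, x - 1, by omega, ?_⟩
        simp only [hg]
        rw [if_pos (by omega)]
        omega
      · rcases Nat.lt_or_ge x (p + 2) with h2 | h2
        · -- r ≤ x ≤ p + 1
          refine ⟨x - r, by omega, r - 1, by omega, ?_⟩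
          simp only [hg]
          split_ifs <;> omega
        · -- p + 2 ≤ x ≤ q + 1
          have hkr : r < k := by
            by_contra hh
            have : k - r = 0 := by omega
            rw [this] at hq
            omega
          obtain ⟨y, hy⟩ : ∃ y, y = x - p - 2 := ⟨_, rfl⟩
          have hylt : y < (k - r) * s := by omega
          have hdiv : y / s < k - r := (Nat.div_lt_iff_lt_mul (by omega)).mpr hylt
          obtain ⟨u, v, hu, hv, huv⟩ : ∃ u v, u < k - r ∧ v < s ∧ s * u + v = y :=
            ⟨y / s, y % s, hdiv, Nat.mod_lt _ (by omega), Nat.div_add_mod y s⟩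
          refine ⟨v, hv, r + u, by omega, ?_⟩
          simp only [hg]
          have h6 : (r + u - r) * s = s * u := by
            rw [Nat.add_sub_cancel_left, Nat.mul_comm]
          split_ifs <;> omega
    obtain ⟨t, ht, m, hm, hgm⟩ := hfind
    have hxmem : x ∈ GG ⟨t, ht⟩ := by
      rw [hGG]
      simp only
      rw [List.mem_toFinset, hL, List.mem_map]
      exact ⟨m, List.mem_range.mpr hm, hgm⟩
    exact Finset.mem_sup.mpr ⟨⟨t, ht⟩, Finset.mem_univ _, hxmem⟩
  have hcc := Finset.card_le_card hcover
  rw [Nat.card_Icc] at hcc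
  omega
end

section
/- Let n, s, r be integers with n > s+r and s > r ≥ 1, and let F ⊆ C([n],2) have property U(s, s+r). Then |F| ≤ max{ C(n,2) − C(n−r,2), C(s+r,2) }. -/
open Finset
open scoped Classical

lemma two_choose_two (m : ℕ) : 2 * m.choose 2 + m = m * m := by
  induction m with
  | zero => rfl
  | succ k ih =>
    rw [Nat.choose_succ_succ]
    simp only [Nat.choose_one_right]
    nlinarith [ih]

lemma choose_two_add (a b : ℕ) : (a+b).choose 2 = a.choose 2 + a*b + b.choose 2 := by
  have t1 := two_choose_two (a+b)
  have t2 := two_choose_two a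
  have t3 := two_choose_two b
  have q : (a+b)*(a+b) = a*a + 2*(a*b) + b*b := by ring
  omega

lemma arith_main {n r j : ℕ} (hj : j ≤ r) (hn : 2*r+2 ≤ n) :
    (n-j)*j + j.choose 2 + (2*r+1-2*j).choose 2 ≤
      max ((n-r)*r + r.choose 2) ((2*r+1).choose 2) := by
  obtain ⟨u, hu⟩ : ∃ u, r = j + u := ⟨r - j, by omega⟩
  obtain ⟨m, hm⟩ : ∃ m, n = 2*r+2+m := ⟨n - (2*r+2), by omega⟩
  subst hu hm
  have e1 : 2*(j+u)+2+m - j = j + 2*u + 2 + m := by omega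
  have e2 : 2*(j+u)+1-2*j = 2*u+1 := by omega
  have e3 : 2*(j+u)+2+m - (j+u) = j + u + 2 + m := by omega
  rw [e1, e2, e3]
  rcases le_or_gt (4*(j+u)) ((2*(j+u)+2+m) + 3*j) with hc | hc
  · apply le_trans ?_ (le_max_left _ _)
    have t1 := two_choose_two j
    have t2 := two_choose_two (2*u+1)
    have t3 := two_choose_two (j+u)
    nlinarith [t1, t2, t3, sq_nonneg (j - u), Nat.zero_le (j*u)]
  · apply le_trans ?_ (le_max_right _ _)
    have t1 := two_choose_two j
    have t2 := two_choose_two (2*u+1)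
    have t3 := two_choose_two (2*(j+u)+1)
    nlinarith [t1, t2, t3]



lemma exists_enum (F E' : Finset (Finset ℕ)) (hE : E' ⊆ F) (hne : E'.Nonempty) {s : ℕ}
    (hcard : E'.card ≤ s) :
    ∃ G : Fin s → Finset ℕ, (∀ i, G i ∈ F) ∧ Finset.univ.sup G = E'.sup id := by
  classical
  obtain ⟨e₀, he₀⟩ := hne
  set l := E'.toList with hl
  have hlen : l.length = E'.card := E'.length_toList
  refine ⟨fun i => l.getD i e₀, fun i => ?_, ?_⟩
  · show l.getD i e₀ ∈ F
    by_cases h : (i : ℕ) < l.length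
    · rw [List.getD_eq_getElem _ _ h]
      exact hE (Finset.mem_toList.1 (l.getElem_mem _))
    · rw [List.getD_eq_default _ _ (le_of_not_gt h)]
      exact hE he₀
  · apply le_antisymm
    · apply Finset.sup_le
      intro i _
      show l.getD i e₀ ≤ E'.sup id
      by_cases h : (i : ℕ) < l.length
      · rw [List.getD_eq_getElem _ _ h]
        exact Finset.le_sup (f := id) (Finset.mem_toList.1 (l.getElem_mem _))
      · rw [List.getD_eq_default _ _ (le_of_not_gt h)]
        exact Finset.le_sup (f := id) he₀
    · apply Finset.sup_le
      intro e he
      have hel : e ∈ l := Finset.mem_toList.2 he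
      obtain ⟨i, hil, hi⟩ := List.mem_iff_getElem.1 hel
      have his : i < s := by omega
      have he2 : e = l.getD ((⟨i, his⟩ : Fin s) : ℕ) e₀ := by
        have hv : ((⟨i, his⟩ : Fin s) : ℕ) = i := rfl
        rw [hv, List.getD_eq_getElem _ _ hil, hi]
      calc id e = e := rfl
        _ = l.getD ((⟨i, his⟩ : Fin s) : ℕ) e₀ := he2
        _ ≤ Finset.univ.sup (fun i : Fin s => l.getD (i : ℕ) e₀) :=
            Finset.le_sup (f := fun i : Fin s => l.getD (i : ℕ) e₀)
              (Finset.mem_univ (⟨i, his⟩ : Fin s))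

lemma grow {F : Finset (Finset ℕ)} {s q : ℕ} (hsq : s ≤ q) (hU : propU F s q)
    (hbig : q + 1 ≤ (F.sup id).card) :
    ∀ d (E' : Finset (Finset ℕ)), E' ⊆ F → E'.Nonempty → E'.card + d = s →
      E'.card + (q + 1 - s) ≤ (E'.sup id).card → False := by
  intro d
  induction d with
  | zero =>
    intro E' hE hne hcard hinv
    obtain ⟨G, hG, hsup⟩ := exists_enum F E' hE hne (le_of_eq hcard)
    have := hU G hG
    rw [hsup] at this
    omega
  | succ d ih =>
    intro E' hE hne hcard hinv
    by_cases hq : q + 1 ≤ (E'.sup id).card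
    · have hcards : E'.card ≤ s := by omega
      obtain ⟨G, hG, hsup⟩ := exists_enum F E' hE hne hcards
      have := hU G hG
      rw [hsup] at this
      omega
    · have hns : ¬ (F.sup id ⊆ E'.sup id) := fun h => by
        have := Finset.card_le_card h
        omega
      obtain ⟨v, hvF, hvE⟩ := Finset.not_subset.1 hns
      obtain ⟨f, hfF, hvf⟩ := Finset.mem_sup.1 hvF
      have hfE : f ∉ E' := fun h => hvE (Finset.mem_sup.2 ⟨f, h, hvf⟩)
      have hcard' : (insert f E').card = E'.card + 1 := Finset.card_insert_of_notMem hfE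
      apply ih (insert f E') (Finset.insert_subset hfF hE) (Finset.insert_nonempty _ _)
        (by omega)
      have hv' : v ∈ (insert f E').sup id := Finset.mem_sup.2 ⟨f, Finset.mem_insert_self _ _, hvf⟩
      have hsub2 : insert v (E'.sup id) ⊆ (insert f E').sup id :=
        Finset.insert_subset hv' (Finset.sup_mono (Finset.subset_insert _ _))
      have := Finset.card_le_card hsub2
      rw [Finset.card_insert_of_notMem hvE] at this
      omega

lemma noBigMatching {n s r : ℕ} {F : Finset (Finset ℕ)}
    (hF : F ⊆ Finset.powersetCard 2 (Finset.Icc 1 n)) (hsr : r < s)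
    (hU : propU F s (s+r)) (hbig : s + r + 1 ≤ (F.sup id).card) :
    ∀ M ⊆ F, (∀ a ∈ M, ∀ b ∈ M, a ≠ b → Disjoint a b) → M.card ≤ r := by
  intro M hM hdisj
  by_contra hc
  obtain ⟨M', hM'M, hM'card⟩ := Finset.exists_subset_card_eq (s := M) (n := r+1) (by omega)
  have hM'F : M' ⊆ F := hM'M.trans hM
  have hsup : (M'.sup id).card = 2 * (r+1) := by
    rw [Finset.sup_eq_biUnion, Finset.card_biUnion]
    · rw [← hM'card]
      rw [Finset.card_eq_sum_ones M', Finset.mul_sum]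
      apply Finset.sum_congr rfl
      intro e he
      have := hF (hM'F he)
      rw [Finset.mem_powersetCard] at this
      simp [this.2]
    · intro a ha b hb hab
      exact hdisj a (hM'M ha) b (hM'M hb) hab
  apply grow (by omega : s ≤ s + r) hU hbig (s - (r+1)) M' hM'F
    (Finset.card_pos.1 (by omega)) (by omega)
  rw [hsup]
  omega


-- `compress {i} {j} A` for i∉A, j∈A is (A ∪ {i}) \ {j}
lemma compress_eq {i j : ℕ} (A : Finset ℕ) (hi : i ∉ A) (hj : j ∈ A) :
    UV.compress {i} {j} A = (A ∪ {i}) \ {j} := by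
  rw [UV.compress_of_disjoint_of_le (Finset.disjoint_singleton_left.2 hi)
    (Finset.singleton_subset_iff.2 hj)]
  rfl

lemma comp_sub {n i j : ℕ} (hi : 1 ≤ i) (hin : i ≤ n) {G : Finset (Finset ℕ)}
    (hG : G ⊆ Finset.powersetCard 2 (Finset.Icc 1 n)) :
    UV.compression {i} {j} G ⊆ Finset.powersetCard 2 (Finset.Icc 1 n) := by
  intro A hA
  rw [UV.mem_compression] at hA
  rcases hA with ⟨hA, -⟩ | ⟨-, b, hb, hcb⟩
  · exact hG hA
  have hbP := Finset.mem_powersetCard.1 (hG hb)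
  unfold UV.compress at hcb
  split_ifs at hcb with hcond
  · obtain ⟨hdisj, hle⟩ := hcond
    have hib : i ∉ b := Finset.disjoint_singleton_left.1 hdisj
    have hjb : j ∈ b := Finset.singleton_subset_iff.1 hle
    subst hcb
    rw [Finset.mem_powersetCard]
    constructor
    · refine (Finset.sdiff_subset).trans ?_
      show b ⊔ {i} ⊆ Finset.Icc 1 n
      refine Finset.union_subset hbP.1 ?_
      simp only [Finset.singleton_subset_iff, Finset.mem_Icc]
      omega
    · show ((b ⊔ {i}) \ {j}).card = 2
      have hij : i ≠ j := fun h => hib (h ▸ hjb)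
      have h1 : (b ⊔ {i}).card = 3 := by
        show (b ∪ {i}).card = 3
        rw [Finset.union_comm, ← Finset.insert_eq, Finset.card_insert_of_notMem hib, hbP.2]
      have hjmem : j ∈ b ⊔ {i} := Finset.mem_union_left _ hjb
      rw [← Finset.erase_eq, Finset.card_erase_of_mem hjmem, h1]
  · subst hcb
    exact hG hb

lemma comp_matching {k i j : ℕ} (hij : i ≠ j) {G : Finset (Finset ℕ)}
    (hmatch : ∀ M ⊆ G, (∀ a ∈ M, ∀ b ∈ M, a ≠ b → Disjoint a b) → M.card ≤ k) :
    ∀ M ⊆ UV.compression {i} {j} G, (∀ a ∈ M, ∀ b ∈ M, a ≠ b → Disjoint a b) → M.card ≤ k := by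
  intro M hM hdisj
  by_cases hall : ∀ B ∈ M, B ∈ G
  · exact hmatch M (fun B hB => hall B hB) hdisj
  push_neg at hall
  obtain ⟨Bs, hBsM, hBsG⟩ := hall
  -- Bs comes from compressing some A* ∈ G
  have hBs := hM hBsM
  rw [UV.mem_compression] at hBs
  rcases hBs with ⟨h1, -⟩ | ⟨-, As, hAsG, hcAs⟩
  · exact absurd h1 hBsG
  have hAsne : UV.compress {i} {j} As ≠ As := by
    intro h
    apply hBsG
    rw [← hcAs, h]
    exact hAsG
  have hcond : i ∉ As ∧ j ∈ As := by
    by_contra hc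
    apply hAsne
    unfold UV.compress
    rw [if_neg]
    intro ⟨hd, hl⟩
    exact hc ⟨Finset.disjoint_singleton_left.1 hd, Finset.singleton_subset_iff.1 hl⟩
  obtain ⟨hiAs, hjAs⟩ := hcond
  have hBseq : Bs = (As ∪ {i}) \ {j} := by rw [← hcAs, compress_eq As hiAs hjAs]
  have hiBs : i ∈ Bs := by
    rw [hBseq]; simp [hij]
  have hjBs : j ∉ Bs := by
    rw [hBseq]; simp
  have hAs_sub : As ⊆ insert j Bs := by
    intro x hx
    rcases eq_or_ne x j with rfl | hxj
    · exact Finset.mem_insert_self _ _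
    · apply Finset.mem_insert_of_mem
      rw [hBseq]
      simp only [Finset.mem_sdiff, Finset.mem_union, Finset.mem_singleton]
      exact ⟨Or.inl hx, hxj⟩
  -- all other members of M are in G and avoid i
  have hothers : ∀ B ∈ M, B ≠ Bs → B ∈ G ∧ i ∉ B := by
    intro B hBM hBne
    have hdisjB : Disjoint B Bs := hdisj B hBM Bs hBsM hBne
    have hiB : i ∉ B := fun h => (Finset.disjoint_left.1 hdisjB h) hiBs
    refine ⟨?_, hiB⟩
    have hB := hM hBM
    rw [UV.mem_compression] at hB
    rcases hB with ⟨h1, -⟩ | ⟨hBG, A, hAG, hcA⟩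
    · exact h1
    rcases eq_or_ne (UV.compress {i} {j} A) A with he | hne
    · rw [← hcA, he]; exact hAG
    have hcondA : i ∉ A ∧ j ∈ A := by
      by_contra hc
      apply hne
      unfold UV.compress
      rw [if_neg]
      intro ⟨hd, hl⟩
      exact hc ⟨Finset.disjoint_singleton_left.1 hd, Finset.singleton_subset_iff.1 hl⟩
    exfalso
    apply hiB
    rw [← hcA, compress_eq A hcondA.1 hcondA.2]
    simp [hij]
  by_cases hjM : ∃ B ∈ M, B ≠ Bs ∧ j ∈ B
  · -- some other B_l contains j
    obtain ⟨Bl, hBlM, hBlne, hjBl⟩ := hjM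
    obtain ⟨hBlG, hiBl⟩ := hothers Bl hBlM hBlne
    -- C_l = compress of B_l is in G
    have hBl' := hM hBlM
    rw [UV.mem_compression] at hBl'
    have hClG : UV.compress {i} {j} Bl ∈ G := by
      rcases hBl' with ⟨-, h2⟩ | ⟨hBG, -⟩
      · exact h2
      · exact absurd hBlG hBG
    rw [compress_eq Bl hiBl hjBl] at hClG
    set Cl := (Bl ∪ {i}) \ {j} with hCl
    have hCl_sub : Cl ⊆ insert i Bl := by
      intro x hx
      rw [hCl] at hx
      simp only [Finset.mem_sdiff, Finset.mem_union, Finset.mem_singleton] at hx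
      rcases hx.1 with h | h
      · exact Finset.mem_insert_of_mem h
      · exact h ▸ Finset.mem_insert_self _ _
    have hiCl : i ∈ Cl := by
      rw [hCl]
      simp [hij]
    have hjCl : j ∉ Cl := by rw [hCl]; simp
    -- rest of the matching
    set Rest := (M.erase Bs).erase Bl with hRest
    have hRestfacts : ∀ b ∈ Rest, b ∈ M ∧ b ≠ Bs ∧ b ≠ Bl ∧ i ∉ b ∧ j ∉ b ∧ b ∈ G := by
      intro b hb
      have hbBl : b ≠ Bl := Finset.ne_of_mem_erase hb
      have hb1 : b ∈ M.erase Bs := Finset.mem_of_mem_erase hb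
      have hbBs : b ≠ Bs := Finset.ne_of_mem_erase hb1
      have hbM : b ∈ M := Finset.mem_of_mem_erase hb1
      obtain ⟨hbG, hib⟩ := hothers b hbM hbBs
      have hjb : j ∉ b := fun h =>
        (Finset.disjoint_left.1 (hdisj b hbM Bl hBlM hbBl) h) hjBl
      exact ⟨hbM, hbBs, hbBl, hib, hjb, hbG⟩
    set M' := insert As (insert Cl Rest) with hM'
    have hsubG : M' ⊆ G := by
      intro b hb
      rw [hM'] at hb
      rcases Finset.mem_insert.1 hb with rfl | hb
      · exact hAsG
      rcases Finset.mem_insert.1 hb with rfl | hb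
      · exact hClG
      · exact (hRestfacts b hb).2.2.2.2.2
    have hAsCl : ∀ x, x ∈ As → x ∈ Cl → False := by
      intro x hxA hxC
      rcases Finset.mem_insert.1 (hAs_sub hxA) with rfl | hxBs
      · exact hjCl hxC
      rcases Finset.mem_insert.1 (hCl_sub hxC) with rfl | hxBl
      · exact hiAs hxA
      · exact (Finset.disjoint_left.1 (hdisj Bs hBsM Bl hBlM (Ne.symm hBlne)) hxBs) hxBl
    have hAsRest : ∀ b ∈ Rest, ∀ x, x ∈ As → x ∈ b → False := by
      intro b hb x hxA hxb
      obtain ⟨hbM, hbBs, hbBl, hib, hjb, hbG⟩ := hRestfacts b hb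
      rcases Finset.mem_insert.1 (hAs_sub hxA) with rfl | hxBs
      · exact hjb hxb
      · exact (Finset.disjoint_left.1 (hdisj Bs hBsM b hbM (Ne.symm hbBs)) hxBs) hxb
    have hClRest : ∀ b ∈ Rest, ∀ x, x ∈ Cl → x ∈ b → False := by
      intro b hb x hxC hxb
      obtain ⟨hbM, hbBs, hbBl, hib, hjb, hbG⟩ := hRestfacts b hb
      rcases Finset.mem_insert.1 (hCl_sub hxC) with rfl | hxBl
      · exact hib hxb
      · exact (Finset.disjoint_left.1 (hdisj Bl hBlM b hbM (Ne.symm hbBl)) hxBl) hxb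
    have hdisj' : ∀ a ∈ M', ∀ b ∈ M', a ≠ b → Disjoint a b := by
      intro a ha b hb hab
      rw [Finset.disjoint_left]
      intro x hxa hxb
      rw [hM'] at ha hb
      rcases Finset.mem_insert.1 ha with rfl | ha'
      · rcases Finset.mem_insert.1 hb with rfl | hb'
        · exact hab rfl
        · rcases Finset.mem_insert.1 hb' with rfl | hb''
          · exact hAsCl x hxa hxb
          · exact hAsRest b hb'' x hxa hxb
      · rcases Finset.mem_insert.1 hb with rfl | hb'
        · rcases Finset.mem_insert.1 ha' with rfl | ha''
          · exact hAsCl x hxb hxa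
          · exact hAsRest a ha'' x hxb hxa
        · rcases Finset.mem_insert.1 ha' with rfl | ha''
          · rcases Finset.mem_insert.1 hb' with rfl | hb''
            · exact hab rfl
            · exact hClRest b hb'' x hxa hxb
          · rcases Finset.mem_insert.1 hb' with rfl | hb''
            · exact hClRest a ha'' x hxb hxa
            · exact (Finset.disjoint_left.1
                (hdisj a (hRestfacts a ha'').1 b (hRestfacts b hb'').1 hab) hxa) hxb
    have hClRest' : Cl ∉ Rest := fun h => (hRestfacts Cl h).2.2.2.1 hiCl
    have hAsRest' : As ∉ insert Cl Rest := by
      intro h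
      rcases Finset.mem_insert.1 h with h | h
      · exact hjCl (h ▸ hjAs)
      · exact (hRestfacts As h).2.2.2.2.1 hjAs
    have hBlM' : Bl ∈ M.erase Bs := Finset.mem_erase.2 ⟨hBlne, hBlM⟩
    have hMcard2 : 2 ≤ M.card := Finset.one_lt_card.2 ⟨Bs, hBsM, Bl, hBlM, Ne.symm hBlne⟩
    have hcardM' : M'.card = M.card := by
      rw [hM', Finset.card_insert_of_notMem hAsRest', Finset.card_insert_of_notMem hClRest',
        hRest, Finset.card_erase_of_mem hBlM', Finset.card_erase_of_mem hBsM]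
      omega
    have := hmatch M' hsubG hdisj'
    omega
  · -- no other member contains j
    push_neg at hjM
    set M' := insert As (M.erase Bs) with hM'
    have hsubG : M' ⊆ G := by
      intro b hb
      rcases Finset.mem_insert.1 hb with rfl | hb
      · exact hAsG
      · exact (hothers b (Finset.mem_of_mem_erase hb) (Finset.ne_of_mem_erase hb)).1
    have hAsRest : ∀ b ∈ M.erase Bs, ∀ x, x ∈ As → x ∈ b → False := by
      intro b hb x hxA hxb
      have hbM := Finset.mem_of_mem_erase hb
      have hbBs := Finset.ne_of_mem_erase hb
      rcases Finset.mem_insert.1 (hAs_sub hxA) with rfl | hxBs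
      · exact hjM b hbM hbBs hxb
      · exact (Finset.disjoint_left.1 (hdisj Bs hBsM b hbM (Ne.symm hbBs)) hxBs) hxb
    have hdisj' : ∀ a ∈ M', ∀ b ∈ M', a ≠ b → Disjoint a b := by
      intro a ha b hb hab
      rw [Finset.disjoint_left]
      intro x hxa hxb
      rcases Finset.mem_insert.1 ha with rfl | ha'
      · rcases Finset.mem_insert.1 hb with rfl | hb'
        · exact hab rfl
        · exact hAsRest b hb' x hxa hxb
      · rcases Finset.mem_insert.1 hb with rfl | hb'
        · exact hAsRest a ha' x hxb hxa
        · exact (Finset.disjoint_left.1 (hdisj a (Finset.mem_of_mem_erase ha') b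
            (Finset.mem_of_mem_erase hb') hab) hxa) hxb
    have hAsnotin : As ∉ M.erase Bs := by
      intro h
      exact hjM As (Finset.mem_of_mem_erase h) (Finset.ne_of_mem_erase h) hjAs
    have hcardM' : M'.card = M.card := by
      rw [hM', Finset.card_insert_of_notMem hAsnotin, Finset.card_erase_of_mem hBsM]
      have : 1 ≤ M.card := Finset.card_pos.2 ⟨Bs, hBsM⟩
      omega
    have := hmatch M' hsubG hdisj'
    omega

lemma measure_comp_lt {i j : ℕ} (hij : i < j) {G : Finset (Finset ℕ)}
    (hne : UV.compression {i} {j} G ≠ G) :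
    ∑ A ∈ UV.compression {i} {j} G, A.sum id < ∑ A ∈ G, A.sum id := by
  have q : ∀ Q ∈ G.filter fun A => UV.compress {i} {j} A ∉ G, UV.compress {i} {j} Q ≠ Q := by
    intro Q hQ h
    rw [Finset.mem_filter] at hQ
    rw [h] at hQ
    exact hQ.2 hQ.1
  have hpt : ∀ A ∈ G.filter fun A => UV.compress {i} {j} A ∉ G,
      (UV.compress {i} {j} A).sum id < A.sum id := by
    intro A hA
    have hcne := q A hA
    have hcond : i ∉ A ∧ j ∈ A := by
      by_contra hc
      apply hcne
      unfold UV.compress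
      rw [if_neg]
      intro ⟨hd, hl⟩
      exact hc ⟨Finset.disjoint_singleton_left.1 hd, Finset.singleton_subset_iff.1 hl⟩
    rw [compress_eq A hcond.1 hcond.2, ← Finset.erase_eq]
    have hjmem : j ∈ A ∪ {i} := Finset.mem_union_left _ hcond.2
    have h1 := Finset.add_sum_erase (A ∪ {i}) id hjmem
    have hsumu : (A ∪ {i}).sum id = A.sum id + i := by
      rw [Finset.union_comm, ← Finset.insert_eq, Finset.sum_insert hcond.1]
      simp [Nat.add_comm]
    simp only [id] at h1 hsumu ⊢
    omega
  rw [UV.compression] at hne ⊢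
  have uA : (G.filter fun A => UV.compress {i} {j} A ∈ G) ∪
      (G.filter fun A => UV.compress {i} {j} A ∉ G) = G :=
    Finset.filter_union_filter_not_eq _ _
  have ne₂ : (G.filter fun A => UV.compress {i} {j} A ∉ G).Nonempty := by
    refine Finset.nonempty_iff_ne_empty.2 fun z => hne ?_
    rw [Finset.filter_image, z, Finset.image_empty, Finset.union_empty]
    rwa [z, Finset.union_empty] at uA
  rw [Finset.sum_union UV.compress_disjoint]
  conv_rhs => rw [← uA]
  rw [Finset.sum_union (Finset.disjoint_filter_filter_not _ _ _), add_lt_add_iff_left,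
    Finset.filter_image, Finset.sum_image UV.compress_injOn]
  exact Finset.sum_lt_sum_of_nonempty ne₂ hpt

lemma exists_fully_compressed (n k : ℕ) :
    ∀ N (G : Finset (Finset ℕ)), G ⊆ Finset.powersetCard 2 (Finset.Icc 1 n) →
    (∀ M ⊆ G, (∀ a ∈ M, ∀ b ∈ M, a ≠ b → Disjoint a b) → M.card ≤ k) →
    (∑ A ∈ G, A.sum id) ≤ N →
    ∃ H, H ⊆ Finset.powersetCard 2 (Finset.Icc 1 n) ∧
      (∀ M ⊆ H, (∀ a ∈ M, ∀ b ∈ M, a ≠ b → Disjoint a b) → M.card ≤ k) ∧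
      H.card = G.card ∧
      ∀ x y, 1 ≤ x → x < y → y ≤ n → UV.IsCompressed {x} {y} H := by
  intro N
  induction N with
  | zero =>
    intro G hG hmatch hmeas
    by_cases hfull : ∀ x y, 1 ≤ x → x < y → y ≤ n → UV.IsCompressed {x} {y} G
    · exact ⟨G, hG, hmatch, rfl, hfull⟩
    · push_neg at hfull
      obtain ⟨x, y, hx, hxy, hyn, hnc⟩ := hfull
      have := measure_comp_lt hxy (hnc : UV.compression {x} {y} G ≠ G)
      omega
  | succ N ih =>
    intro G hG hmatch hmeas
    by_cases hfull : ∀ x y, 1 ≤ x → x < y → y ≤ n → UV.IsCompressed {x} {y} G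
    · exact ⟨G, hG, hmatch, rfl, hfull⟩
    · push_neg at hfull
      obtain ⟨x, y, hx, hxy, hyn, hnc⟩ := hfull
      have hlt := measure_comp_lt hxy (hnc : UV.compression {x} {y} G ≠ G)
      obtain ⟨H, h1, h2, h3, h4⟩ := ih (UV.compression {x} {y} G)
        (comp_sub hx (by omega) hG) (comp_matching (by omega) hmatch) (by omega)
      exact ⟨H, h1, h2, by rw [h3, UV.card_compression], h4⟩

lemma pair_mem_step {n : ℕ} {H : Finset (Finset ℕ)}
    (hH : H ⊆ Finset.powersetCard 2 (Finset.Icc 1 n))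
    (hcomp : ∀ x y, 1 ≤ x → x < y → y ≤ n → UV.IsCompressed {x} {y} H) :
    ∀ a b, ({a, b} : Finset ℕ) ∈ H → a ≠ b → ∀ x, 1 ≤ x → x < a → x ≠ b →
      ({x, b} : Finset ℕ) ∈ H := by
  intro a b hab hne x hx1 hxa hxb
  have hsub := (Finset.mem_powersetCard.1 (hH hab)).1
  have han : a ≤ n := (Finset.mem_Icc.1 (hsub (Finset.mem_insert_self a {b}))).2
  have hIC := hcomp x a hx1 hxa han
  have hmem := UV.compress_mem_compression (u := ({x} : Finset ℕ)) (v := ({a} : Finset ℕ)) hab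
  rw [hIC.eq] at hmem
  have hxab : x ∉ ({a, b} : Finset ℕ) := by
    simp only [Finset.mem_insert, Finset.mem_singleton]
    push_neg
    exact ⟨ne_of_lt hxa, hxb⟩
  have haab : a ∈ ({a, b} : Finset ℕ) := Finset.mem_insert_self _ _
  rw [compress_eq _ hxab haab] at hmem
  have : (({a, b} : Finset ℕ) ∪ {x}) \ {a} = ({x, b} : Finset ℕ) := by
    ext z
    simp only [Finset.mem_sdiff, Finset.mem_union, Finset.mem_insert, Finset.mem_singleton]
    have h1 : x ≠ a := ne_of_lt hxa
    constructor
    · rintro ⟨(rfl | rfl) | rfl, hz⟩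
      · exact absurd rfl hz
      · exact Or.inr rfl
      · exact Or.inl rfl
    · rintro (rfl | rfl)
      · exact ⟨Or.inr rfl, h1⟩
      · exact ⟨Or.inl (Or.inr rfl), fun h => hne h.symm⟩
  rwa [this] at hmem

lemma structure_lemma {n r : ℕ} {H : Finset (Finset ℕ)} (hn : 2*r+2 ≤ n)
    (hH : H ⊆ Finset.powersetCard 2 (Finset.Icc 1 n))
    (hmatch : ∀ M ⊆ H, (∀ a ∈ M, ∀ b ∈ M, a ≠ b → Disjoint a b) → M.card ≤ r)
    (hcomp : ∀ x y, 1 ≤ x → x < y → y ≤ n → UV.IsCompressed {x} {y} H) :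
    ∃ j ≤ r, ∀ e ∈ H, (e ∩ Finset.Icc 1 j).Nonempty ∨ e ⊆ Finset.Icc 1 (2*r+1-j) := by
  -- some canonical pair is missing
  have hex : ∃ i₀ ∈ Finset.Icc 1 (r+1), ({i₀, 2*r+3-i₀} : Finset ℕ) ∉ H := by
    by_contra hall
    push_neg at hall
    set Mc := (Finset.Icc 1 (r+1)).image (fun i => ({i, 2*r+3-i} : Finset ℕ)) with hMc
    have hMcH : Mc ⊆ H := by
      intro e he
      obtain ⟨i, hi, rfl⟩ := Finset.mem_image.1 he
      exact hall i hi
    have hinj : Set.InjOn (fun i => ({i, 2*r+3-i} : Finset ℕ)) (Finset.Icc 1 (r+1)) := by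
      intro i hi i' hi' heq
      simp only [Finset.coe_Icc, Set.mem_Icc] at hi hi'
      have heq' : ({i, 2*r+3-i} : Finset ℕ) = {i', 2*r+3-i'} := heq
      have : i ∈ ({i', 2*r+3-i'} : Finset ℕ) := by
        rw [← heq']; exact Finset.mem_insert_self _ _
      simp only [Finset.mem_insert, Finset.mem_singleton] at this
      rcases this with h | h
      · exact h
      · omega
    have hcard : Mc.card = r + 1 := by
      rw [hMc, Finset.card_image_of_injOn hinj, Nat.card_Icc]
      omega
    have hdisj : ∀ a ∈ Mc, ∀ b ∈ Mc, a ≠ b → Disjoint a b := by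
      intro a ha b hb hab
      obtain ⟨i, hi, rfl⟩ := Finset.mem_image.1 ha
      obtain ⟨i', hi', rfl⟩ := Finset.mem_image.1 hb
      rw [Finset.mem_Icc] at hi hi'
      have hii' : i ≠ i' := fun h => hab (by rw [h])
      rw [Finset.disjoint_left]
      intro x hx hx'
      simp only [Finset.mem_insert, Finset.mem_singleton] at hx hx'
      omega
    have := hmatch Mc hMcH hdisj
    omega
  obtain ⟨i₀, hi₀, hP⟩ := hex
  rw [Finset.mem_Icc] at hi₀
  refine ⟨i₀ - 1, by omega, ?_⟩
  intro e he
  by_contra hcon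
  push_neg at hcon
  obtain ⟨hint, hnsub⟩ := hcon
  have hesub := (Finset.mem_powersetCard.1 (hH he)).1
  have hecard := (Finset.mem_powersetCard.1 (hH he)).2
  have hlow : ∀ z ∈ e, i₀ ≤ z := by
    intro z hz
    have h1 := Finset.mem_Icc.1 (hesub hz)
    have h2 : z ∉ Finset.Icc 1 (i₀ - 1) := fun hz' =>
      Finset.nonempty_iff_ne_empty.1 ⟨z, Finset.mem_inter.2 ⟨hz, hz'⟩⟩ hint
    rw [Finset.mem_Icc] at h2
    omega
  obtain ⟨w, hwe, hwn⟩ := Finset.not_subset.1 hnsub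
  have hwIcc := Finset.mem_Icc.1 (hesub hwe)
  rw [Finset.mem_Icc] at hwn
  have hwc : 2*r+3-i₀ ≤ w := by omega
  obtain ⟨a, b, hab, habe⟩ := Finset.card_eq_two.1 hecard
  have main : ∀ a b, ({a, b} : Finset ℕ) ∈ H → a ≠ b → i₀ ≤ a → 2*r+3-i₀ ≤ b → False := by
    intro a b hmemH hne ha hb
    have h1 : ({i₀, b} : Finset ℕ) ∈ H := by
      rcases eq_or_lt_of_le ha with rfl | hlt
      · exact hmemH
      · exact pair_mem_step hH hcomp a b hmemH hne i₀ (by omega) hlt (by omega)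
    have h2 : ({i₀, 2*r+3-i₀} : Finset ℕ) ∈ H := by
      rcases eq_or_lt_of_le hb with heq | hlt
      · rwa [heq]
      · have h1' : ({b, i₀} : Finset ℕ) ∈ H := by rwa [Finset.pair_comm]
        have h3 := pair_mem_step hH hcomp b i₀ h1' (by omega) (2*r+3-i₀) (by omega) hlt
          (by omega)
        rwa [Finset.pair_comm]
    exact hP h2
  subst habe
  simp only [Finset.mem_insert, Finset.mem_singleton] at hwe
  rcases hwe with rfl | rfl
  · exact main b w (by rwa [Finset.pair_comm] at he) (Ne.symm hab)
      (hlow b (Finset.mem_insert_of_mem (Finset.mem_singleton_self _))) hwc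
  · exact main a w he hab (hlow a (Finset.mem_insert_self _ _)) hwc

lemma count_lemma {n r j : ℕ} {H : Finset (Finset ℕ)} (hj : j ≤ r) (hjn : j ≤ n)
    (hH : H ⊆ Finset.powersetCard 2 (Finset.Icc 1 n))
    (hstruct : ∀ e ∈ H, (e ∩ Finset.Icc 1 j).Nonempty ∨ e ⊆ Finset.Icc 1 (2*r+1-j)) :
    H.card ≤ (n-j)*j + j.choose 2 + (2*r+1-2*j).choose 2 := by
  classical
  set H₁ := H.filter (fun e => (e ∩ Finset.Icc 1 j).Nonempty) with hH₁
  set H₂ := H.filter (fun e => ¬(e ∩ Finset.Icc 1 j).Nonempty) with hH₂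
  have hsplit : H₁.card + H₂.card = H.card := Finset.card_filter_add_card_filter_not _
  have hb1 : H₁.card ≤ (n-j)*j + j.choose 2 := by
    have hsub : H₁ ⊆ Finset.powersetCard 2 (Finset.Icc 1 n) \ Finset.powersetCard 2 (Finset.Icc (j+1) n) := by
      intro e he
      rw [hH₁, Finset.mem_filter] at he
      obtain ⟨heH, hene⟩ := he
      rw [Finset.mem_sdiff]
      refine ⟨hH heH, ?_⟩
      intro hmem
      obtain ⟨z, hz⟩ := hene
      rw [Finset.mem_inter, Finset.mem_Icc] at hz
      have := (Finset.mem_powersetCard.1 hmem).1 hz.1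
      rw [Finset.mem_Icc] at this
      omega
    have hsubP : Finset.powersetCard 2 (Finset.Icc (j+1) n) ⊆
        Finset.powersetCard 2 (Finset.Icc 1 n) :=
      Finset.powersetCard_mono (Finset.Icc_subset_Icc_left (by omega))
    have := Finset.card_le_card hsub
    rw [Finset.card_sdiff_of_subset hsubP, Finset.card_powersetCard, Finset.card_powersetCard,
      Nat.card_Icc, Nat.card_Icc] at this
    have h1 : n + 1 - 1 = n := by omega
    have h2 : n + 1 - (j+1) = n - j := by omega
    rw [h1, h2] at this
    have h3 := choose_two_add (n-j) j
    have h4 : n - j + j = n := by omega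
    rw [h4] at h3
    omega
  have hb2 : H₂.card ≤ (2*r+1-2*j).choose 2 := by
    have hsub : H₂ ⊆ Finset.powersetCard 2 (Finset.Icc (j+1) (2*r+1-j)) := by
      intro e he
      rw [hH₂, Finset.mem_filter] at he
      obtain ⟨heH, hene⟩ := he
      rcases hstruct e heH with h | h
      · exact absurd h hene
      rw [Finset.mem_powersetCard]
      refine ⟨?_, (Finset.mem_powersetCard.1 (hH heH)).2⟩
      intro z hz
      have hz1 := Finset.mem_Icc.1 (h hz)
      have hz2 : z ∉ Finset.Icc 1 j := fun hz' => hene ⟨z, Finset.mem_inter.2 ⟨hz, hz'⟩⟩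
      have hz3 := Finset.mem_Icc.1 ((Finset.mem_powersetCard.1 (hH heH)).1 hz)
      rw [Finset.mem_Icc] at hz2 ⊢
      omega
    have := Finset.card_le_card hsub
    rw [Finset.card_powersetCard, Nat.card_Icc] at this
    have h1 : 2*r+1-j + 1 - (j+1) = 2*r+1-2*j := by omega
    rwa [h1] at this
  omega

/-- the complete solution for `k = 2` (Theorem 2.1 of the paper). -/
theorem stmt4 (n s r : ℕ) (hn : n > s + r) (hsr : s > r) (hr : 1 ≤ r)
    (F : Finset (Finset ℕ)) (hF : F ⊆ Finset.powersetCard 2 (Finset.Icc 1 n))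
    (hU : propU F s (s + r)) :
    F.card ≤ max (Nat.choose n 2 - Nat.choose (n - r) 2) (Nat.choose (s + r) 2) := by
  classical
  by_cases hA : (F.sup id).card ≤ s + r
  · -- Case A: small support
    have hFsub : F ⊆ Finset.powersetCard 2 (F.sup id) := by
      intro e he
      rw [Finset.mem_powersetCard]
      exact ⟨Finset.le_sup (f := id) he, (Finset.mem_powersetCard.1 (hF he)).2⟩
    have h1 : F.card ≤ (F.sup id).card.choose 2 := by
      have := Finset.card_le_card hFsub
      rwa [Finset.card_powersetCard] at this
    have h2 : (F.sup id).card.choose 2 ≤ (s+r).choose 2 := Nat.choose_le_choose 2 hA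
    exact le_max_of_le_right (h1.trans h2)
  · -- Case B: large support
    push_neg at hA
    have hnm := noBigMatching hF hsr hU (by omega)
    obtain ⟨H, hH1, hH2, hH3, hH4⟩ :=
      exists_fully_compressed n r (∑ A ∈ F, A.sum id) F hF hnm le_rfl
    have hn2 : 2*r+2 ≤ n := by omega
    obtain ⟨j, hj, hstruct⟩ := structure_lemma hn2 hH1 hH2 hH4
    have hcount := count_lemma hj (by omega) hH1 hstruct
    have harith := arith_main hj hn2
    have hconv : (n-r)*r + r.choose 2 = n.choose 2 - (n-r).choose 2 := by
      have h3 := choose_two_add (n-r) r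
      have h4 : n - r + r = n := by omega
      rw [h4] at h3
      omega
    have hch : (2*r+1).choose 2 ≤ (s+r).choose 2 := Nat.choose_le_choose 2 (by omega)
    have hFH : F.card = H.card := hH3.symm
    rw [hFH]
    calc H.card ≤ (n-j)*j + j.choose 2 + (2*r+1-2*j).choose 2 := hcount
      _ ≤ max ((n-r)*r + r.choose 2) ((2*r+1).choose 2) := harith
      _ ≤ max (n.choose 2 - (n-r).choose 2) ((s+r).choose 2) :=
          max_le_max (le_of_eq hconv) hch
end

section
/- Let n, s, r be integers with n > s+r and s > r ≥ 1, and let F ⊆ C([n],2) have property U(s, s+r). If |⋃_{F∈F} F| > s+r, then ν(F) ≤ r. -/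
open Finset
open scoped Classical

lemma aux_propU (F : Finset (Finset ℕ)) (s q : ℕ) (hU : propU F s q)
    (E : Finset (Finset ℕ)) (hEF : E ⊆ F) (hne : E.Nonempty) (hcard : E.card ≤ s) :
    (E.sup id).card ≤ q := by
  obtain ⟨e0, he0⟩ := hne
  set L := E.toList with hL
  have hlen : L.length = E.card := Finset.length_toList E
  set G : Fin s → Finset ℕ := fun i => L.getD i e0 with hG
  have hGmem : ∀ i, G i ∈ F := by
    intro i
    by_cases h : (i : ℕ) < L.length
    · have : G i ∈ E := by
        simp only [hG, List.getD_eq_getElem?_getD, List.getElem?_eq_getElem h, Option.getD_some]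
        exact Finset.mem_toList.mp (List.getElem_mem h)
      exact hEF this
    · have : G i = e0 := by
        simp [hG, List.getD_eq_getElem?_getD, List.getElem?_eq_none (le_of_not_gt h)]
      rw [this]; exact hEF he0
  have hsup : E.sup id ≤ Finset.univ.sup G := by
    apply Finset.sup_le
    intro e he
    have heL : e ∈ L := Finset.mem_toList.mpr he
    obtain ⟨i, hi, hie⟩ := List.mem_iff_getElem.mp heL
    have his : i < s := lt_of_lt_of_le (hlen ▸ hi) hcard
    have hge : G ⟨i, his⟩ = e := by
      simp [hG, List.getD_eq_getElem?_getD, List.getElem?_eq_getElem hi, hie]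
    calc e = G ⟨i, his⟩ := hge.symm
      _ ≤ Finset.univ.sup G := Finset.le_sup (Finset.mem_univ _)
  exact le_trans (Finset.card_le_card hsup) (hU G hGmem)

/-- Claim 2.2 of the paper. -/
theorem stmt5 (n s r : ℕ) (hn : n > s + r) (hsr : s > r) (hr : 1 ≤ r)
    (F : Finset (Finset ℕ)) (hF : F ⊆ Finset.powersetCard 2 (Finset.Icc 1 n))
    (hU : propU F s (s + r)) (hcover : (F.sup id).card > s + r) :
    ∀ S ⊆ F, (S : Set (Finset ℕ)).PairwiseDisjoint id → S.card ≤ r := by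
  intro S hSF hPD
  by_contra hcon
  push_neg at hcon
  obtain ⟨T, hTS, hTcard⟩ := Finset.exists_subset_card_eq hcon
  have hTF : T ⊆ F := hTS.trans hSF
  have hcard2 : ∀ e ∈ F, e.card = 2 := fun e he => (Finset.mem_powersetCard.mp (hF he)).2
  set U0 := T.sup id with hU0
  have hU0eq : U0 = T.biUnion id := Finset.sup_eq_biUnion T id
  have hU0card : U0.card = 2 * (r + 1) := by
    rw [hU0eq, Finset.card_biUnion]
    · have hs : ∑ u ∈ T, (id u).card = ∑ _u ∈ T, 2 :=
        Finset.sum_congr rfl (fun e he => by simp [hcard2 e (hTF he)])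
      rw [hs]
      simp [hTcard, mul_comm]
    · intro x hx y hy hxy
      exact hPD (hTS hx) (hTS hy) hxy
  set V := F.sup id with hV
  have hVcard : s + r < V.card := hcover
  have hWex : s - r - 1 ≤ (V \ U0).card := by
    have h1 : V.card - U0.card ≤ (V \ U0).card := Finset.le_card_sdiff _ _
    omega
  obtain ⟨W, hWsub, hWcard⟩ := Finset.exists_subset_card_eq hWex
  have hpick : ∀ v ∈ W, ∃ e, e ∈ F ∧ v ∈ e := by
    intro v hv
    have : v ∈ V := (Finset.mem_sdiff.mp (hWsub hv)).1
    obtain ⟨e, he, hve⟩ := Finset.mem_sup.mp this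
    exact ⟨e, he, hve⟩
  choose f hfF hfv using hpick
  set E2 := W.attach.image (fun v => f v.1 v.2) with hE2
  set E := T ∪ E2 with hE
  have hEF : E ⊆ F := by
    intro e he
    rcases Finset.mem_union.mp he with h | h
    · exact hTF h
    · obtain ⟨v, _, rfl⟩ := Finset.mem_image.mp h
      exact hfF v.1 v.2
  have hEne : E.Nonempty := by
    have hT : T.Nonempty := Finset.card_pos.mp (by omega)
    exact hT.mono Finset.subset_union_left
  have hEcard : E.card ≤ s := by
    have h1 : E.card ≤ T.card + E2.card := Finset.card_union_le T E2
    have h2 : E2.card ≤ W.card := le_trans Finset.card_image_le (by simp)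
    omega
  have hbig : s + r + 1 ≤ (E.sup id).card := by
    have hU0sub : U0 ⊆ E.sup id := Finset.sup_mono Finset.subset_union_left
    have hWsub2 : W ⊆ E.sup id := by
      intro v hv
      apply Finset.mem_sup.mpr
      refine ⟨f v hv, Finset.mem_union_right _ ?_, hfv v hv⟩
      exact Finset.mem_image.mpr ⟨⟨v, hv⟩, Finset.mem_attach _ _, rfl⟩
    have hdisj : Disjoint U0 W := by
      apply Finset.disjoint_left.mpr
      intro a ha haW
      exact (Finset.mem_sdiff.mp (hWsub haW)).2 ha
    have hsub : U0 ∪ W ⊆ E.sup id := Finset.union_subset hU0sub hWsub2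
    have hcardUW : (U0 ∪ W).card = U0.card + W.card := Finset.card_union_of_disjoint hdisj
    have := Finset.card_le_card hsub
    omega
  have := aux_propU F s (s + r) hU E hEF hEne hEcard
  omega
end

section
/- Let n, k, s, q be integers with s ≥ 2 and k ≤ q ≤ k+s−2 and n > q. Then m(n,k,s,q) = C(q,k); that is, every F ⊆ C([n],k) with property U(s,q) satisfies |F| ≤ C(q,k), and C([q],k) (viewed inside C([n],k)) attains this bound. -/
open Finset
open scoped Classical

/-- Greedy construction: we can pick `s` members of `F` (with repetition) whose union has
size at least `min (|⋃F|) (k + i)` for each `i < s`. -/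
lemma build (F : Finset (Finset ℕ)) (s k : ℕ) (F₀ : Finset ℕ) (hF₀ : F₀ ∈ F)
    (hcard : ∀ A ∈ F, A.card = k) :
    ∀ i, i < s → ∃ G : Fin s → Finset ℕ, (∀ j, G j ∈ F) ∧
      (∀ j : Fin s, (j.val = 0 ∨ i < j.val) → G j = F₀) ∧
      min ((F.sup id).card) (k + i) ≤ (Finset.univ.sup G).card := by
  intro i
  induction i with
  | zero =>
    intro hi
    refine ⟨fun _ => F₀, fun _ => hF₀, fun _ _ => rfl, ?_⟩
    have hsup : (Finset.univ.sup (fun _ : Fin s => F₀)) = F₀ := by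
      apply le_antisymm
      · exact Finset.sup_le fun _ _ => le_rfl
      · exact Finset.le_sup (f := fun _ : Fin s => F₀) (Finset.mem_univ (⟨0, hi⟩ : Fin s))
    rw [hsup, hcard F₀ hF₀]
    exact min_le_right _ _
  | succ i ih =>
    intro hi
    obtain ⟨G, hGmem, hGcond, hGmin⟩ := ih (by omega)
    by_cases hT : (F.sup id).card ≤ (Finset.univ.sup G).card
    · refine ⟨G, hGmem, fun j hj => hGcond j (by omega), ?_⟩
      have := min_le_left ((F.sup id).card) (k + (i+1))
      omega
    · push_neg at hT
      -- the current union is a proper subset of the total union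
      have hsub : Finset.univ.sup G ⊆ F.sup id := by
        show Finset.univ.sup G ≤ F.sup id
        exact Finset.sup_le fun j _ => Finset.le_sup (f := (id : Finset ℕ → Finset ℕ)) (hGmem j)
      have hss : Finset.univ.sup G ⊂ F.sup id :=
        hsub.ssubset_of_ne (by intro h; rw [h] at hT; omega)
      obtain ⟨x, hxT, hxG⟩ := Finset.exists_of_ssubset hss
      obtain ⟨A, hAF, hxA⟩ := Finset.mem_sup.mp hxT
      set idx : Fin s := ⟨i + 1, hi⟩ with hidx
      set G' : Fin s → Finset ℕ := Function.update G idx A with hG'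
      have hG'mem : ∀ j, G' j ∈ F := by
        intro j
        by_cases hj : j = idx
        · simp [hG', hj, hAF]
        · simp [hG', Function.update_of_ne hj, hGmem j]
      have hG'cond : ∀ j : Fin s, (j.val = 0 ∨ i + 1 < j.val) → G' j = F₀ := by
        intro j hj
        have hjne : j ≠ idx := by
          intro h
          have : (j : ℕ) = i + 1 := by rw [h]
          omega
        rw [hG', Function.update_of_ne hjne]
        exact hGcond j (by omega)
      have hF₀le : F₀ ≤ Finset.univ.sup G' := by
        have h0 : G' ⟨0, by omega⟩ = F₀ := hG'cond ⟨0, by omega⟩ (Or.inl rfl)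
        calc F₀ = G' ⟨0, by omega⟩ := h0.symm
        _ ≤ _ := Finset.le_sup (Finset.mem_univ _)
      have hmono : Finset.univ.sup G ≤ Finset.univ.sup G' := by
        apply Finset.sup_le
        intro j _
        by_cases hj : j = idx
        · rw [hj, hGcond idx (Or.inr (by simp [hidx]))]
          exact hF₀le
        · calc G j = G' j := (Function.update_of_ne hj _ _).symm
          _ ≤ _ := Finset.le_sup (Finset.mem_univ _)
      have hxG' : x ∈ Finset.univ.sup G' := by
        have : x ∈ G' idx := by
          simp only [hG', Function.update_self]; exact hxA
        exact Finset.mem_sup.mpr ⟨idx, Finset.mem_univ _, this⟩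
      have hssG : Finset.univ.sup G ⊂ Finset.univ.sup G' :=
        Finset.ssubset_iff_of_subset hmono |>.mpr ⟨x, hxG', hxG⟩
      have hcardlt := Finset.card_lt_card hssG
      exact ⟨G', hG'mem, hG'cond, by omega⟩

/-- If `F ⊆ C([n],k)` has property `U(s,q)` with `q ≤ k+s-2`, the whole union has size `≤ q`. -/
lemma union_card_le (n k s q : ℕ) (F : Finset (Finset ℕ))
    (hF : F ⊆ Finset.powersetCard k (Finset.Icc 1 n)) (hU : propU F s q)
    (hs : 2 ≤ s) (hq2 : q ≤ k + s - 2) : (F.sup id).card ≤ q := by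
  rcases F.eq_empty_or_nonempty with rfl | ⟨F₀, hF₀⟩
  · simp
  have hcard : ∀ A ∈ F, A.card = k := fun A hA => (Finset.mem_powersetCard.mp (hF hA)).2
  obtain ⟨G, hGmem, _, hGmin⟩ := build F s k F₀ hF₀ hcard (s - 1) (by omega)
  have hle := hU G hGmem
  have hk1 : k ≤ (F.sup id).card := by
    have : F₀ ⊆ F.sup id := Finset.le_sup (f := id) hF₀
    have := Finset.card_le_card this
    have := hcard F₀ hF₀
    omega
  omega

/-- Claim 2.3 of the paper, `m(n,k,s,q) = C(q,k)` for `k ≤ q ≤ k+s-2`. -/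
theorem stmt6 (n k s q : ℕ) (hk : 1 ≤ k) (hs : 2 ≤ s) (hq1 : k ≤ q)
    (hq2 : q ≤ k + s - 2) (hn : n > q) :
    mMax n k s q = Nat.choose q k := by
  apply le_antisymm
  · -- upper bound
    apply Finset.sup_le
    intro F hF
    rw [Finset.mem_filter, Finset.mem_powerset] at hF
    obtain ⟨hFsub, hFU⟩ := hF
    have hT := union_card_le n k s q F hFsub hFU hs hq2
    have hsub : F ⊆ Finset.powersetCard k (F.sup id) := by
      intro A hA
      exact Finset.mem_powersetCard.mpr
        ⟨Finset.le_sup (f := id) hA, (Finset.mem_powersetCard.mp (hFsub hA)).2⟩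
    calc F.card ≤ (Finset.powersetCard k (F.sup id)).card := Finset.card_le_card hsub
    _ = ((F.sup id).card).choose k := Finset.card_powersetCard _ _
    _ ≤ q.choose k := Nat.choose_le_choose k hT
  · -- lower bound: the family of all k-subsets of [q]
    set F₀ : Finset (Finset ℕ) := Finset.powersetCard k (Finset.Icc 1 q) with hF₀
    have hmem : F₀ ∈ (Finset.powersetCard k (Finset.Icc 1 n)).powerset.filter
        fun F => propU F s q := by
      rw [Finset.mem_filter, Finset.mem_powerset]
      constructor
      · intro A hA
        rw [Finset.mem_powersetCard] at hA ⊢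
        exact ⟨hA.1.trans (Finset.Icc_subset_Icc_right (by omega)), hA.2⟩
      · intro G hG
        have hsub : Finset.univ.sup G ⊆ Finset.Icc 1 q := by
          show Finset.univ.sup G ≤ Finset.Icc 1 q
          exact Finset.sup_le fun i _ => (Finset.mem_powersetCard.mp (hG i)).1
        calc (Finset.univ.sup G).card ≤ (Finset.Icc 1 q).card := Finset.card_le_card hsub
        _ = q := by rw [Nat.card_Icc]; omega
    have hcard : F₀.card = q.choose k := by
      rw [hF₀, Finset.card_powersetCard, Nat.card_Icc]
      simp
    calc q.choose k = F₀.card := hcard.symm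
    _ ≤ _ := Finset.le_sup hmem
end

section
/- Let s ≥ 2 and n ≥ 2s+2 be integers, and let F ⊆ C([n],3) be a shifted family with property U(s, 2s+1) such that {1, 2, 2s+2} ∈ F. Then ν(F) ≤ (s+1)/2. -/
open Finset
open scoped Classical

lemma sort_triple (a b c : ℕ) (h1 : a < b) (h2 : b < c) :
    ({a,b,c} : Finset ℕ).sort (·≤·) = [a,b,c] := by
  rw [show ({a,b,c} : Finset ℕ) = insert a (insert b {c}) from rfl]
  rw [Finset.sort_insert, Finset.sort_insert, Finset.sort_singleton]
  · simp; omega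
  · simp; omega
  · intro x hx; simp at hx; omega
  · simp; omega

lemma card_triple (a b c : ℕ) (h1 : a < b) (h2 : b < c) :
    ({a,b,c} : Finset ℕ).card = 3 := by
  rw [Finset.card_insert_of_notMem (by simp; omega),
    Finset.card_insert_of_notMem (by simp; omega), Finset.card_singleton]

lemma key_lemma (s : ℕ) (F : Finset (Finset ℕ)) (hU : propU F s (2*s+1))
    (G : Finset (Finset ℕ)) (hGF : G ⊆ F) (hGs : G.card ≤ s) :
    ((G.sup id).card ≤ 2*s+1) := by
  rcases G.eq_empty_or_nonempty with rfl | ⟨g₀, hg₀⟩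
  · simp
  set L := G.toList with hL
  have hlen : L.length = G.card := Finset.length_toList G
  set f : Fin s → Finset ℕ := fun i => if h : (i : ℕ) < L.length then L.get ⟨i, h⟩ else g₀ with hf
  have hfG : ∀ i, f i ∈ G := by
    intro i; rw [hf]; dsimp only
    split
    · exact Finset.mem_toList.mp (L.get_mem _)
    · exact hg₀
  have hsup : Finset.univ.sup f = G.sup id := by
    apply le_antisymm
    · exact Finset.sup_le fun i _ => Finset.le_sup (f := id) (hfG i)
    · apply Finset.sup_le
      intro g hg
      obtain ⟨⟨idx, hidx⟩, hget⟩ := List.mem_iff_get.mp (Finset.mem_toList.mpr hg)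
      have hidx2 : idx < G.card := by rw [← hlen]; exact hidx
      have hidx' : idx < s := lt_of_lt_of_le hidx2 hGs
      have : f ⟨idx, hidx'⟩ = g := by
        rw [hf]; dsimp only; rw [dif_pos]; exact hget
      calc (id g : Finset ℕ) = f ⟨idx, hidx'⟩ := this.symm
        _ ≤ Finset.univ.sup f := Finset.le_sup (Finset.mem_univ _)
  have := hU f (fun i => hGF (hfG i))
  rwa [hsup] at this

/-- Claim 2.8 of the paper, `ν(F) ≤ (s+1)/2`. -/
theorem stmt9 (n s : ℕ) (hs : 2 ≤ s) (hn : 2 * s + 2 ≤ n)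
    (F : Finset (Finset ℕ)) (hF : F ⊆ Finset.powersetCard 3 (Finset.Icc 1 n))
    (hshift : IsShifted n 3 F) (hU : propU F s (2 * s + 1))
    (hmem : ({1, 2, 2 * s + 2} : Finset ℕ) ∈ F) :
    ∀ S ⊆ F, (S : Set (Finset ℕ)).PairwiseDisjoint id → 2 * S.card ≤ s + 1 := by
  intro S hSF hdisj
  rcases S.eq_empty_or_nonempty with rfl | hSne
  · simp only [Finset.card_empty]; omega
  have key := key_lemma s F hU
  have hmem3 : ∀ A ∈ S, A.card = 3 := fun A hA =>
    (Finset.mem_powersetCard.mp (hF (hSF hA))).2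
  -- card of sup of any subfamily of S
  have hsupcard : ∀ S', S' ⊆ S → (S'.sup id).card = 3 * S'.card := by
    intro S' hS'
    rw [Finset.sup_eq_biUnion, Finset.card_biUnion]
    · have h3 : ∀ A ∈ S', (id A).card = 3 := fun A hA => hmem3 A (hS' hA)
      rw [Finset.sum_congr rfl h3, Finset.sum_const, smul_eq_mul, mul_comm]
    · intro x hx y hy hxy
      exact hdisj (Finset.mem_coe.mpr (hS' hx)) (Finset.mem_coe.mpr (hS' hy)) hxy
  -- m ≤ s
  have hms : S.card ≤ s := by
    by_contra h
    push_neg at h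
    obtain ⟨S', hsub, hcard⟩ := Finset.exists_subset_card_eq (s := S) (le_of_lt h)
    have h1 := key S' (hsub.trans hSF) (le_of_eq hcard)
    have h2 := hsupcard S' hsub
    rw [hcard] at h2
    omega
  have h3m : 3 * S.card ≤ 2*s+1 := by
    have h1 := key S hSF hms
    have h2 := hsupcard S Finset.Subset.rfl
    omega
  -- the sets {1,2,j} are in F
  have hpair : ∀ j, 3 ≤ j → j ≤ 2*s+2 → ({1,2,j} : Finset ℕ) ∈ F := by
    intro j hj3 hjs
    apply hshift _ hmem
    · apply Finset.mem_powersetCard.mpr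
      constructor
      · intro x hx
        simp only [Finset.mem_insert, Finset.mem_singleton] at hx
        simp only [Finset.mem_Icc]
        rcases hx with rfl | rfl | rfl <;> omega
      · exact card_triple 1 2 j (by omega) (by omega)
    · unfold shiftLE
      rw [sort_triple 1 2 j (by omega) (by omega),
        sort_triple 1 2 (2*s+2) (by omega) (by omega)]
      exact List.Forall₂.cons le_rfl (List.Forall₂.cons le_rfl
        (List.Forall₂.cons hjs List.Forall₂.nil))
  set U := S.sup id with hU'
  have hUcard : U.card = 3 * S.card := hsupcard S Finset.Subset.rfl
  set W := U ∪ ({1,2} : Finset ℕ) with hW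
  set J := Finset.Icc 1 (2*s+2) \ W with hJdef
  have hJprop : ∀ j ∈ J, 3 ≤ j ∧ j ≤ 2*s+2 ∧ j ∉ U := by
    intro j hj
    rw [hJdef, Finset.mem_sdiff, Finset.mem_Icc, hW, Finset.mem_union] at hj
    push_neg at hj
    have := hj.2.2
    simp only [Finset.mem_insert, Finset.mem_singleton] at this
    refine ⟨by omega, hj.1.2, hj.2.1⟩
  by_cases hJ : J = ∅
  · -- Icc 1 (2s+2) ⊆ W; use S together with {1,2,2s+2}
    exfalso
    have hIccW : Finset.Icc 1 (2*s+2) ⊆ W := Finset.sdiff_eq_empty_iff_subset.mp hJ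
    have hWle : W.card ≤ 3 * S.card + 2 := by
      calc W.card ≤ U.card + ({1,2} : Finset ℕ).card := Finset.card_union_le _ _
        _ ≤ 3 * S.card + 2 := by rw [hUcard]; simp
    have hWge : 2*s+2 ≤ W.card := by
      have := Finset.card_le_card hIccW
      simpa using this
    -- so 2s ≤ 3m, hence m+1 ≤ s
    have hm1s : S.card + 1 ≤ s := by omega
    set G := insert ({1,2,2*s+2} : Finset ℕ) S with hG
    have hGF : G ⊆ F := Finset.insert_subset hmem hSF
    have hGcard : G.card ≤ s := le_trans (Finset.card_insert_le _ _) (by omega)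
    have hle := key G hGF hGcard
    have hsub : Finset.Icc 1 (2*s+2) ⊆ G.sup id := by
      intro x hx
      have hxW := hIccW hx
      rw [hW, Finset.mem_union] at hxW
      rcases hxW with hxU | hx12
      · exact (Finset.sup_mono (Finset.subset_insert _ _) : U ≤ G.sup id) hxU
      · have h1 : ({1,2,2*s+2} : Finset ℕ) ≤ G.sup id :=
          Finset.le_sup (f := id) (Finset.mem_insert_self _ _)
        apply h1
        simp only [Finset.mem_insert, Finset.mem_singleton] at hx12 ⊢
        tauto
    have hfin := Finset.card_le_card hsub
    rw [Nat.card_Icc] at hfin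
    omega
  · obtain ⟨j₀, hj₀⟩ := Finset.nonempty_iff_ne_empty.mpr hJ
    by_cases hc : J.card ≤ s - S.card
    · -- use S plus all of {1,2,j}, j ∈ J : union covers Icc 1 (2s+2), contradiction
      exfalso
      set G := S ∪ J.image (fun j => ({1,2,j} : Finset ℕ)) with hG
      have hGF : G ⊆ F := by
        rw [hG]
        apply Finset.union_subset hSF
        intro A hA
        obtain ⟨j, hj, rfl⟩ := Finset.mem_image.mp hA
        exact hpair j (hJprop j hj).1 (hJprop j hj).2.1
      have hGcard : G.card ≤ s := by
        calc G.card ≤ S.card + (J.image _).card := Finset.card_union_le _ _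
          _ ≤ S.card + J.card := by
              have := Finset.card_image_le (s := J) (f := fun j => ({1,2,j} : Finset ℕ))
              omega
          _ ≤ s := by omega
      have hle := key G hGF hGcard
      have hsub : Finset.Icc 1 (2*s+2) ⊆ G.sup id := by
        intro x hx
        by_cases hxW : x ∈ W
        · rw [hW, Finset.mem_union] at hxW
          rcases hxW with hxU | hx12
          · exact (Finset.sup_mono (Finset.subset_union_left) : U ≤ G.sup id) hxU
          · have h1 : ({1,2,j₀} : Finset ℕ) ≤ G.sup id := by
              apply Finset.le_sup (f := id)
              rw [hG, Finset.mem_union]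
              exact Or.inr (Finset.mem_image.mpr ⟨j₀, hj₀, rfl⟩)
            apply h1
            simp only [Finset.mem_insert, Finset.mem_singleton] at hx12 ⊢
            tauto
        · have hxJ : x ∈ J := by rw [hJdef, Finset.mem_sdiff]; exact ⟨hx, hxW⟩
          have h1 : ({1,2,x} : Finset ℕ) ≤ G.sup id := by
            apply Finset.le_sup (f := id)
            rw [hG, Finset.mem_union]
            exact Or.inr (Finset.mem_image.mpr ⟨x, hxJ, rfl⟩)
          apply h1
          simp
      have hfin := Finset.card_le_card hsub
      rw [Nat.card_Icc] at hfin
      omega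
    · -- use S plus s - m fresh sets {1,2,j}
      push_neg at hc
      obtain ⟨T, hTJ, hTcard⟩ := Finset.exists_subset_card_eq (s := J) (le_of_lt hc)
      set G := S ∪ T.image (fun j => ({1,2,j} : Finset ℕ)) with hG
      have hGF : G ⊆ F := by
        rw [hG]
        apply Finset.union_subset hSF
        intro A hA
        obtain ⟨j, hj, rfl⟩ := Finset.mem_image.mp hA
        exact hpair j (hJprop j (hTJ hj)).1 (hJprop j (hTJ hj)).2.1
      have hGcard : G.card ≤ s := by
        calc G.card ≤ S.card + (T.image _).card := Finset.card_union_le _ _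
          _ ≤ S.card + T.card := by
              have := Finset.card_image_le (s := T) (f := fun j => ({1,2,j} : Finset ℕ))
              omega
          _ ≤ s := by omega
      have hle := key G hGF hGcard
      have hdisjUT : Disjoint U T := by
        rw [Finset.disjoint_right]
        intro j hj
        exact (hJprop j (hTJ hj)).2.2
      have hsub : U ∪ T ⊆ G.sup id := by
        apply Finset.union_subset
        · exact (Finset.sup_mono (Finset.subset_union_left) : U ≤ G.sup id)
        · intro x hx
          have h1 : ({1,2,x} : Finset ℕ) ≤ G.sup id := by
            apply Finset.le_sup (f := id)
            rw [hG, Finset.mem_union]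
            exact Or.inr (Finset.mem_image.mpr ⟨x, hx, rfl⟩)
          apply h1
          simp
      have hcard2 := Finset.card_le_card hsub
      rw [Finset.card_union_of_disjoint hdisjUT, hUcard, hTcard] at hcard2
      omega
end

section
/- Let n ≥ 8 and let F ⊆ C([n],3) have property U(3,7) with {1,2,8} ∈ F. Then |F ∩ C([7],3)| ≤ 25, i.e., F contains at most 25 of the 35 three-element subsets of [7]. -/
open Finset
open scoped Classical

/-- Claim 2.11 of the paper. -/
theorem stmt12 (n : ℕ) (hn : 8 ≤ n)
    (F : Finset (Finset ℕ)) (hF : F ⊆ Finset.powersetCard 3 (Finset.Icc 1 n))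
    (hU : propU F 3 7) (hmem : ({1, 2, 8} : Finset ℕ) ∈ F) :
    (F ∩ Finset.powersetCard 3 (Finset.Icc 1 7)).card ≤ 25 := by
  classical
  set S := F ∩ Finset.powersetCard 3 (Finset.Icc 1 7) with hSdef
  have key : ∀ A ∈ S, ∀ B ∈ S, (A ∪ B ∪ {1, 2, 8} : Finset ℕ).card ≤ 7 := by
    intro A hA B hB
    have hA' : A ∈ F := (Finset.mem_inter.mp hA).1
    have hB' : B ∈ F := (Finset.mem_inter.mp hB).1
    have h := hU ![A, B, {1, 2, 8}] (by
      intro i; fin_cases i <;> simpa using (by first | exact hA' | exact hB' | exact hmem))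
    have heq : Finset.univ.sup ![A, B, ({1, 2, 8} : Finset ℕ)] = A ∪ B ∪ {1, 2, 8} := by
      have : (Finset.univ : Finset (Fin 3)) = {0, 1, 2} := rfl
      rw [this]
      simp [Finset.sup_insert, Finset.sup_singleton, Finset.sup_eq_union,
        Finset.union_assoc]
    rwa [heq] at h
  set C5 := Finset.Icc 3 7 with hC5
  set P3 := Finset.powersetCard 3 C5 with hP3
  set ψ : Finset ℕ → Finset ℕ := fun B => if B ∈ S then insert 1 (C5 \ B) else B with hψ
  have hSsub : S ⊆ Finset.powersetCard 3 (Finset.Icc 1 7) := Finset.inter_subset_right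
  have hC5sub : C5 ⊆ Finset.Icc 1 7 := by intro x hx; simp [hC5] at hx ⊢; omega
  -- image properties
  have himg : ∀ B ∈ P3, ψ B ∈ Finset.powersetCard 3 (Finset.Icc 1 7) \ S := by
    intro B hB
    rw [hP3, Finset.mem_powersetCard] at hB
    obtain ⟨hBsub, hBcard⟩ := hB
    have h1notC5 : (1 : ℕ) ∉ C5 := by simp [hC5]
    have h1notB : (1 : ℕ) ∉ C5 \ B := fun h => h1notC5 (Finset.mem_sdiff.mp h).1
    by_cases hBS : B ∈ S
    · have hψB : ψ B = insert 1 (C5 \ B) := by simp [hψ, hBS]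
      have hcard : (insert 1 (C5 \ B)).card = 3 := by
        rw [Finset.card_insert_of_notMem h1notB, Finset.card_sdiff_of_subset hBsub]
        simp [hC5, hBcard]
      have hsub : insert 1 (C5 \ B) ⊆ Finset.Icc 1 7 := by
        intro x hx
        rcases Finset.mem_insert.mp hx with h | h
        · simp [h]
        · exact hC5sub (Finset.mem_sdiff.mp h).1
      have hnotS : insert 1 (C5 \ B) ∉ S := by
        intro hmem2
        have h7 := key B hBS _ hmem2
        have hun : B ∪ insert 1 (C5 \ B) ∪ {1, 2, 8} = insert 1 C5 ∪ {1, 2, 8} := by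
          ext x
          by_cases hxB : x ∈ B
          · have := hBsub hxB
            simp [hxB, this]
          · simp [hxB]
        rw [hun] at h7
        have : insert 1 C5 ∪ {1, 2, 8} = Finset.Icc 1 8 := by
          rw [hC5]; decide
        rw [this] at h7
        simp [Nat.card_Icc] at h7
      rw [hψB]
      exact Finset.mem_sdiff.mpr ⟨Finset.mem_powersetCard.mpr ⟨hsub, hcard⟩, hnotS⟩
    · have hψB : ψ B = B := by simp [hψ, hBS]
      rw [hψB]
      exact Finset.mem_sdiff.mpr
        ⟨Finset.mem_powersetCard.mpr ⟨hBsub.trans hC5sub, hBcard⟩, hBS⟩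
  have hinj : Set.InjOn ψ P3 := by
    intro B hB B' hB' heq
    rw [hP3, Finset.mem_coe, Finset.mem_powersetCard] at hB hB'
    have h1notC5 : (1 : ℕ) ∉ C5 := by simp [hC5]
    have h1B : (1 : ℕ) ∉ B := fun h => h1notC5 (hB.1 h)
    have h1B' : (1 : ℕ) ∉ B' := fun h => h1notC5 (hB'.1 h)
    by_cases hs : B ∈ S <;> by_cases hs' : B' ∈ S
    · simp [hψ, hs, hs'] at heq
      have h1 : (1:ℕ) ∉ C5 \ B := fun h => h1notC5 (Finset.mem_sdiff.mp h).1
      have h1' : (1:ℕ) ∉ C5 \ B' := fun h => h1notC5 (Finset.mem_sdiff.mp h).1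
      have : C5 \ B = C5 \ B' := by
        have := congrArg (fun s => Finset.erase s 1) heq
        simpa [Finset.erase_insert h1, Finset.erase_insert h1'] using this
      have := congrArg (fun s => C5 \ s) this
      simpa [Finset.sdiff_sdiff_eq_self hB.1, Finset.sdiff_sdiff_eq_self hB'.1] using this
    · exfalso
      simp [hψ, hs, hs'] at heq
      exact h1B' (heq ▸ Finset.mem_insert_self 1 _)
    · exfalso
      simp [hψ, hs, hs'] at heq
      exact h1B (heq ▸ Finset.mem_insert_self 1 _)
    · simpa [hψ, hs, hs'] using heq
  -- counting
  have hdisj : Disjoint S (P3.image ψ) := by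
    rw [Finset.disjoint_right]
    intro A hA
    obtain ⟨B, hB, rfl⟩ := Finset.mem_image.mp hA
    exact (Finset.mem_sdiff.mp (himg B hB)).2
  have hsub : S ∪ P3.image ψ ⊆ Finset.powersetCard 3 (Finset.Icc 1 7) := by
    intro A hA
    rcases Finset.mem_union.mp hA with h | h
    · exact hSsub h
    · obtain ⟨B, hB, rfl⟩ := Finset.mem_image.mp h
      exact (Finset.mem_sdiff.mp (himg B hB)).1
  have hcard35 : (Finset.powersetCard 3 (Finset.Icc 1 7)).card = 35 := by
    rw [Finset.card_powersetCard]; simp [Nat.card_Icc]; decide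
  have hcardP3 : (P3.image ψ).card = 10 := by
    rw [Finset.card_image_of_injOn hinj, hP3, Finset.card_powersetCard]
    simp [hC5, Nat.card_Icc]
    decide
  have := Finset.card_le_card hsub
  rw [Finset.card_union_of_disjoint hdisj, hcard35, hcardP3] at this
  omega
end

section
/- Let n ≥ 8 and let F ⊆ C([n],3) be a shifted family with property U(3,7) such that {2,3,4} ∈ F. Then {1,6,8} ∉ F. -/
open Finset
open scoped Classical

/-- (part of) Claim 2.10 of the paper. -/
theorem stmt13 (n : ℕ) (hn : 8 ≤ n)
    (F : Finset (Finset ℕ)) (hF : F ⊆ Finset.powersetCard 3 (Finset.Icc 1 n))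
    (hshift : IsShifted n 3 F) (hU : propU F 3 7)
    (hmem : ({2, 3, 4} : Finset ℕ) ∈ F) :
    ({1, 6, 8} : Finset ℕ) ∉ F := by
  intro h168
  have h157 : ({1, 5, 7} : Finset ℕ) ∈ F := by
    apply hshift _ h168
    · rw [Finset.mem_powersetCard]
      constructor
      · intro x hx
        fin_cases hx <;> simp <;> omega
      · decide
    · unfold shiftLE
      have h1 : Finset.sort ({1, 5, 7} : Finset ℕ) (· ≤ ·) = [1, 5, 7] := by
        have := Finset.sort_insert (r := (· ≤ ·)) (a := 1) (s := ({5,7} : Finset ℕ))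
          (by intro b hb; fin_cases hb <;> norm_num) (by decide)
        have h2 := Finset.sort_insert (r := (· ≤ ·)) (a := 5) (s := ({7} : Finset ℕ))
          (by intro b hb; fin_cases hb <;> norm_num) (by decide)
        simp_all [Finset.sort_singleton]
      have h2 : Finset.sort ({1, 6, 8} : Finset ℕ) (· ≤ ·) = [1, 6, 8] := by
        have := Finset.sort_insert (r := (· ≤ ·)) (a := 1) (s := ({6,8} : Finset ℕ))
          (by intro b hb; fin_cases hb <;> norm_num) (by decide)
        have h2 := Finset.sort_insert (r := (· ≤ ·)) (a := 6) (s := ({8} : Finset ℕ))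
          (by intro b hb; fin_cases hb <;> norm_num) (by decide)
        simp_all [Finset.sort_singleton]
      rw [h1, h2]
      decide
  have := hU ![{2,3,4}, {1,6,8}, {1,5,7}] (by
    intro i; fin_cases i <;> assumption)
  revert this
  decide
end

section
/- Let n, s, t be integers with s > t ≥ 1 and n ≥ 2s+t+1, and let F ⊆ C([n],3) be a shifted family with property U(s, 2s+t). If for some i ∈ {1,…,t+1} the set B_i := {i, 2t+3−i, 2s+t+2−i} is not in F, then ν(F \ A(2s+t, 3, n, 3)) ≤ t; that is, any collection of pairwise disjoint members of F that are not contained in [2s+t] has size at most t. -/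
open Finset
open scoped Classical

/-- first element of the sorted enumeration -/
def fa (A : Finset ℕ) : ℕ := (A.sort (· ≤ ·)).getD 0 0
/-- second element of the sorted enumeration -/
def fb (A : Finset ℕ) : ℕ := (A.sort (· ≤ ·)).getD 1 0
/-- third element of the sorted enumeration -/
def fc (A : Finset ℕ) : ℕ := (A.sort (· ≤ ·)).getD 2 0

lemma sort3 (A : Finset ℕ) (h : A.card = 3) :
    fa A < fb A ∧ fb A < fc A ∧ A.sort (· ≤ ·) = [fa A, fb A, fc A] := by
  have hlen : (A.sort (· ≤ ·)).length = 3 := by rw [Finset.length_sort, h]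
  obtain ⟨a, b, c, hl⟩ := List.length_eq_three.mp hlen
  have hsorted := Finset.pairwise_sort A (· ≤ ·)
  have hnodup := Finset.sort_nodup A (· ≤ ·)
  rw [hl] at hsorted hnodup
  simp [List.pairwise_cons] at hsorted
  simp at hnodup
  have ha : fa A = a := by simp [fa, hl]
  have hb : fb A = b := by simp [fb, hl]
  have hc : fc A = c := by simp [fc, hl]
  refine ⟨by omega, by omega, by rw [ha, hb, hc, hl]⟩

lemma mem_iff_sort3 (A : Finset ℕ) (h : A.card = 3) (x : ℕ) :
    x ∈ A ↔ (x = fa A ∨ x = fb A ∨ x = fc A) := by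
  obtain ⟨_, _, hl⟩ := sort3 A h
  rw [← Finset.mem_sort (· ≤ ·), hl]
  simp

/-- Proposition 2.14 of the paper. -/
theorem stmt16 (n s t : ℕ) (hts : t < s) (ht : 1 ≤ t) (hn : 2 * s + t + 1 ≤ n)
    (F : Finset (Finset ℕ)) (hF : F ⊆ Finset.powersetCard 3 (Finset.Icc 1 n))
    (hshift : IsShifted n 3 F) (hU : propU F s (2 * s + t))
    (hB : ∃ i, 1 ≤ i ∧ i ≤ t + 1 ∧
      ({i, 2 * t + 3 - i, 2 * s + t + 2 - i} : Finset ℕ) ∉ F) :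
    ∀ S ⊆ F \ famA (2 * s + t) 3 n 3,
      (S : Set (Finset ℕ)).PairwiseDisjoint id → S.card ≤ t := by
  obtain ⟨i, hi1, hi2, hBnot⟩ := hB
  intro S hS hdisj
  by_contra hcard
  push_neg at hcard
  -- basic facts about members of S
  have hmem : ∀ A ∈ S, A.card = 3 ∧ A ⊆ Finset.Icc 1 n ∧ A ∈ F ∧
      (A ∩ Finset.Icc 1 (2 * s + t)).card < 3 := by
    intro A hA
    have h1 := hS hA
    rw [Finset.mem_sdiff] at h1
    have h2 := hF h1.1
    rw [Finset.mem_powersetCard] at h2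
    refine ⟨h2.2, h2.1, h1.1, ?_⟩
    by_contra hge
    push_neg at hge
    exact h1.2 (by
      rw [famA, Finset.mem_filter, Finset.mem_powersetCard]
      exact ⟨⟨h2.1, h2.2⟩, hge⟩)
  -- each member of S has its largest element > 2s+t, and fa ≥ 1
  have hbig : ∀ A ∈ S, 2 * s + t < fc A ∧ 1 ≤ fa A := by
    intro A hA
    obtain ⟨h3, hsub, _, hint⟩ := hmem A hA
    obtain ⟨h1, h2, _⟩ := sort3 A h3
    have hfa : fa A ∈ A := (mem_iff_sort3 A h3 (fa A)).mpr (Or.inl rfl)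
    have hfa1 : 1 ≤ fa A := (Finset.mem_Icc.mp (hsub hfa)).1
    refine ⟨?_, hfa1⟩
    -- there is an element of A outside Icc 1 (2s+t)
    by_contra hle
    push_neg at hle
    have : A ∩ Finset.Icc 1 (2 * s + t) = A := by
      apply Finset.inter_eq_left.mpr
      intro x hx
      have hx1 := (Finset.mem_Icc.mp (hsub hx)).1
      have hx2 : x ≤ fc A := by
        rcases (mem_iff_sort3 A h3 x).mp hx with h | h | h <;> omega
      exact Finset.mem_Icc.mpr ⟨hx1, by omega⟩
    rw [this, h3] at hint
    omega
  -- fa is injective on S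
  have hfaA : ∀ A ∈ S, fa A ∈ A := fun A hA =>
    (mem_iff_sort3 A (hmem A hA).1 (fa A)).mpr (Or.inl rfl)
  have hfbA : ∀ A ∈ S, fb A ∈ A := fun A hA =>
    (mem_iff_sort3 A (hmem A hA).1 (fb A)).mpr (Or.inr (Or.inl rfl))
  have hdisj' : ∀ A ∈ S, ∀ A' ∈ S, A ≠ A' → Disjoint A A' := by
    intro A hA A' hA' hne
    exact hdisj hA hA' hne
  -- the filtered family whose minimum is at least i
  set S' := S.filter (fun A => i ≤ fa A) with hS'def
  have hS'card : t + 2 - i ≤ S'.card := by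
    set T := S.filter (fun A => ¬ i ≤ fa A) with hTdef
    have hTcard : T.card ≤ i - 1 := by
      have hinj : Set.InjOn fa T := by
        intro A hA A' hA' heq
        by_contra hne
        have hA1 : A ∈ S := Finset.mem_of_mem_filter _ hA
        have hA1' : A' ∈ S := Finset.mem_of_mem_filter _ hA'
        have := hdisj' A hA1 A' hA1' hne
        exact (Finset.disjoint_left.mp this (hfaA A hA1)) (heq ▸ hfaA A' hA1')
      have himg : T.image fa ⊆ Finset.Icc 1 (i - 1) := by
        intro x hx
        obtain ⟨A, hA, rfl⟩ := Finset.mem_image.mp hx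
        have hA1 : A ∈ S := Finset.mem_of_mem_filter _ hA
        have := (hbig A hA1).2
        have hlt : ¬ i ≤ fa A := (Finset.mem_filter.mp hA).2
        exact Finset.mem_Icc.mpr ⟨this, by omega⟩
      have := Finset.card_le_card himg
      rw [Finset.card_image_of_injOn hinj] at this
      simpa [Nat.card_Icc] using this
    have hsplit : S'.card + T.card = S.card := by
      rw [hS'def, hTdef]
      exact Finset.card_filter_add_card_filter_not _
    omega
  -- the set of the two smallest elements of members of S'
  have hS'S : S' ⊆ S := Finset.filter_subset _ _
  set W := S'.biUnion (fun A => ({fa A, fb A} : Finset ℕ)) with hWdef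
  have hpairsub : ∀ A ∈ S', ({fa A, fb A} : Finset ℕ) ⊆ A := by
    intro A hA
    have hA1 := hS'S hA
    intro x hx
    rcases Finset.mem_insert.mp hx with rfl | hx
    · exact hfaA A hA1
    · rw [Finset.mem_singleton] at hx
      exact hx ▸ hfbA A hA1
  have hWcard : W.card = 2 * S'.card := by
    rw [hWdef, Finset.card_biUnion (fun A hA A' hA' hne =>
      Finset.disjoint_of_subset_left (hpairsub A hA)
        (Finset.disjoint_of_subset_right (hpairsub A' hA')
          (hdisj' A (hS'S hA) A' (hS'S hA') hne)))]
    rw [Finset.sum_congr rfl (fun A hA => ?_), Finset.sum_const, smul_eq_mul,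
      Nat.mul_comm]
    have h3 := (hmem A (hS'S hA)).1
    obtain ⟨h1, _, _⟩ := sort3 A h3
    rw [Finset.card_insert_of_notMem (by simp; omega), Finset.card_singleton]
  have hWlb : ∀ w ∈ W, i ≤ w := by
    intro w hw
    obtain ⟨A, hA, hw⟩ := Finset.mem_biUnion.mp hw
    have hfi : i ≤ fa A := (Finset.mem_filter.mp hA).2
    have h3 := (hmem A (hS'S hA)).1
    obtain ⟨h1, _, _⟩ := sort3 A h3
    rcases Finset.mem_insert.mp hw with rfl | hw
    · exact hfi
    · rw [Finset.mem_singleton] at hw; omega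
  have hWne : W.Nonempty := by
    rw [← Finset.card_pos, hWcard]; omega
  set M := W.max' hWne with hMdef
  have hMW : M ∈ W := W.max'_mem hWne
  have hMlb : 2 * t + 3 - i ≤ M := by
    have hsub : W ⊆ Finset.Icc i M := fun w hw =>
      Finset.mem_Icc.mpr ⟨hWlb w hw, W.le_max' w hw⟩
    have := Finset.card_le_card hsub
    rw [Nat.card_Icc, hWcard] at this
    omega
  -- M is the middle element of some A ∈ S'
  obtain ⟨A, hAS', hMin⟩ := Finset.mem_biUnion.mp hMW
  have hAS : A ∈ S := hS'S hAS'
  have h3 := (hmem A hAS).1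
  obtain ⟨h1, h2, hl⟩ := sort3 A h3
  have hfbM : M ≤ fb A := by
    rcases Finset.mem_insert.mp hMin with hMin' | hMin'
    · have hfbW : fb A ∈ W := Finset.mem_biUnion.mpr ⟨A, hAS', by simp⟩
      have hle := W.le_max' _ hfbW
      rw [← hMdef] at hle
      omega
    · rw [Finset.mem_singleton] at hMin'; omega
  have hfai : i ≤ fa A := (Finset.mem_filter.mp hAS').2
  have hfcbig : 2 * s + t < fc A := (hbig A hAS).1
  -- now show B_i ≼ A, contradiction
  set x := i with hx
  set y := 2 * t + 3 - i with hy
  set z := 2 * s + t + 2 - i with hz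
  have hxy : x < y := by omega
  have hyz : y < z := by omega
  have hcard3 : ({x, y, z} : Finset ℕ).card = 3 :=
    Finset.card_eq_three.mpr ⟨x, y, z, by omega, by omega, by omega, rfl⟩
  have hBmem : ({x, y, z} : Finset ℕ) ∈ Finset.powersetCard 3 (Finset.Icc 1 n) := by
    rw [Finset.mem_powersetCard]
    refine ⟨?_, hcard3⟩
    intro u hu
    simp only [Finset.mem_insert, Finset.mem_singleton] at hu
    rcases hu with rfl | rfl | rfl <;> (rw [Finset.mem_Icc]; omega)
  have hBsort : ({x, y, z} : Finset ℕ).sort (· ≤ ·) = [x, y, z] := by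
    obtain ⟨g1, g2, gl⟩ := sort3 _ hcard3
    have hmemB := mem_iff_sort3 _ hcard3
    have hxB := (hmemB x).mp (by simp)
    have hyB := (hmemB y).mp (by simp)
    have hzB := (hmemB z).mp (by simp)
    have hax : fa {x, y, z} = x := by omega
    have hby : fb {x, y, z} = y := by omega
    have hcz : fc {x, y, z} = z := by omega
    rw [gl, hax, hby, hcz]
  have hle : shiftLE ({x, y, z} : Finset ℕ) A := by
    rw [shiftLE, hBsort, hl]
    refine List.Forall₂.cons (by omega) (List.Forall₂.cons (by omega)
      (List.Forall₂.cons (by omega) List.Forall₂.nil))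
  exact hBnot (hshift A (hmem A hAS).2.2.1 _ hBmem hle)
end

section
/- Fix integers n, k, s, p, r with 1 ≤ r ≤ k and r ≤ p ≤ s+r−1, set q = (k−r)(s+1)+p, and let F ⊆ C([n],k) have property U(s+1, q). For B ⊆ [p+1], let F(B) := { G \ [p+1] : G ∈ F, G ∩ [p+1] = B }. Then for every B ⊆ [p+1] with |B| ≤ r−1 one has ν(F(B)) ≤ s, i.e., F(B) contains no s+1 pairwise disjoint sets. -/
open Finset
open scoped Classical

/-- Claim 3.1 of the paper. -/
theorem stmt17 (n k s p r q : ℕ) (hr : 1 ≤ r) (hrk : r ≤ k) (hrp : r ≤ p)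
    (hps : p ≤ s + r - 1) (hq : q = (k - r) * (s + 1) + p)
    (F : Finset (Finset ℕ)) (hF : F ⊆ Finset.powersetCard k (Finset.Icc 1 n))
    (hU : propU F (s + 1) q)
    (B : Finset ℕ) (hB : B ⊆ Finset.Icc 1 (p + 1)) (hBcard : B.card ≤ r - 1) :
    ∀ S ⊆ (F.filter fun G => G ∩ Finset.Icc 1 (p + 1) = B).image
        (fun G => G \ Finset.Icc 1 (p + 1)),
      (S : Set (Finset ℕ)).PairwiseDisjoint id → S.card ≤ s := by
  intro S hS hdisj
  by_contra hcard
  push_neg at hcard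
  have hs1 : 1 ≤ s := by omega
  obtain ⟨T, hTS, hT⟩ := Finset.exists_subset_card_eq (show s + 1 ≤ S.card by omega)
  set P := Finset.Icc 1 (p + 1) with hP
  have hmem : ∀ x ∈ T, ∃ G, G ∈ F ∧ G ∩ P = B ∧ G \ P = x := by
    intro x hx
    have := hS (hTS hx)
    simp only [Finset.mem_image, Finset.mem_filter] at this
    obtain ⟨G, ⟨hGF, hGB⟩, hGx⟩ := this
    exact ⟨G, hGF, hGB, hGx⟩
  choose! g hg1 hg2 hg3 using hmem
  have e := T.equivFinOfCardEq hT
  set t : Fin (s + 1) → Finset ℕ := fun i => (e.symm i : Finset ℕ) with ht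
  have htT : ∀ i, t i ∈ T := fun i => (e.symm i).2
  set H : Fin (s + 1) → Finset ℕ := fun i => g (t i) with hH
  have hHF : ∀ i, H i ∈ F := fun i => hg1 _ (htT i)
  have hHB : ∀ i, H i ∩ P = B := fun i => hg2 _ (htT i)
  have hHt : ∀ i, H i \ P = t i := fun i => hg3 _ (htT i)
  have hHk : ∀ i, (H i).card = k := fun i =>
    (Finset.mem_powersetCard.mp (hF (hHF i))).2
  have hbk : B.card ≤ k := by
    have := Finset.card_inter_add_card_sdiff (H 0) P
    rw [hHB, hHt, hHk] at this
    omega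
  have htk : ∀ i, (t i).card = k - B.card := by
    intro i
    have := Finset.card_inter_add_card_sdiff (H i) P
    rw [hHB, hHt, hHk] at this
    omega
  have htinj : Function.Injective t := fun i j hij =>
    e.symm.injective (Subtype.ext hij)
  have hdisjt : ∀ i ∈ (Finset.univ : Finset (Fin (s + 1))), ∀ j ∈ Finset.univ,
      i ≠ j → Disjoint (t i) (t j) := by
    intro i _ j _ hij
    exact hdisj (Finset.mem_coe.mpr (hTS (htT i))) (Finset.mem_coe.mpr (hTS (htT j)))
      (fun h => hij (htinj h))
  have hBt : ∀ i, Disjoint B (t i) := by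
    intro i
    rw [← hHt i]
    exact (Finset.sdiff_disjoint.mono_right hB).symm
  have hsub : B ∪ Finset.univ.biUnion t ⊆ Finset.univ.sup H := by
    have hHsub : ∀ i, H i ⊆ Finset.univ.sup H := fun i =>
      Finset.le_sup (Finset.mem_univ i)
    apply Finset.union_subset
    · refine subset_trans ?_ (hHsub 0)
      rw [← hHB 0]
      exact Finset.inter_subset_left
    · refine Finset.biUnion_subset.mpr fun i _ => ?_
      refine subset_trans ?_ (hHsub i)
      rw [← hHt i]
      exact Finset.sdiff_subset
  have hcard2 : (B ∪ Finset.univ.biUnion t).card = B.card + (s + 1) * (k - B.card) := by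
    rw [Finset.card_union_of_disjoint (Finset.disjoint_biUnion_right _ _ _ |>.mpr
      fun i _ => hBt i), Finset.card_biUnion hdisjt]
    simp [htk, Finset.sum_const, Finset.card_univ, mul_comm]
  have hle : B.card + (s + 1) * (k - B.card) ≤ q := by
    calc B.card + (s + 1) * (k - B.card) = (B ∪ Finset.univ.biUnion t).card := hcard2.symm
      _ ≤ (Finset.univ.sup H).card := Finset.card_le_card hsub
      _ ≤ q := hU H hHF
  have hkb : k - B.card = (k - r) + (r - B.card) := by omega
  have hsd : s ≤ s * (r - B.card) := Nat.le_mul_of_pos_right s (by omega)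
  have hexp : (s + 1) * ((k - r) + (r - B.card)) =
      (k - r) * (s + 1) + (r - B.card) + s * (r - B.card) := by ring
  have hrb : B.card + (r - B.card) = r := by omega
  have hpr : p + 1 ≤ s + r := by omega
  rw [hkb, hexp] at hle
  rw [hq] at hle
  linarith
end

section
/- Fix integers n, k, s, p, r with 1 ≤ r ≤ k and r ≤ p ≤ s+r−1, set q = (k−r)(s+1)+p, and let F ⊆ C([n],k) have property U(s+1, q). For B ⊆ [p+1], let F(B) := { G \ [p+1] : G ∈ F, G ∩ [p+1] = B }. Let B ⊆ [p+1] with |B| = r−1, and let i₁,…,i_{s+1} ∈ [p+1] \ B be (not necessarily distinct) elements with {i₁,…,i_{s+1}} = [p+1] \ B. Then there do not exist sets G₁ ∈ F(B ∪ {i₁}), …, G_{s+1} ∈ F(B ∪ {i_{s+1}}) that are pairwise disjoint; i.e., the families F(B ∪ {i₁}), …, F(B ∪ {i_{s+1}}) are cross-dependent. -/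
open Finset
open scoped Classical

/-- Claim 3.2 of the paper. -/
theorem stmt18 (n k s p r q : ℕ) (hr : 1 ≤ r) (hrk : r ≤ k) (hrp : r ≤ p)
    (hps : p ≤ s + r - 1) (hq : q = (k - r) * (s + 1) + p)
    (F : Finset (Finset ℕ)) (hF : F ⊆ Finset.powersetCard k (Finset.Icc 1 n))
    (hU : propU F (s + 1) q)
    (B : Finset ℕ) (hB : B ⊆ Finset.Icc 1 (p + 1)) (hBcard : B.card = r - 1)
    (i : Fin (s + 1) → ℕ) (hi : ∀ j, i j ∈ Finset.Icc 1 (p + 1) \ B)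
    (hcover : Finset.image i Finset.univ = Finset.Icc 1 (p + 1) \ B) :
    ¬ ∃ G : Fin (s + 1) → Finset ℕ,
        (∀ j, G j ∈ (F.filter fun H => H ∩ Finset.Icc 1 (p + 1) = B ∪ {i j}).image
            (fun H => H \ Finset.Icc 1 (p + 1))) ∧
        ∀ j₁ j₂, j₁ ≠ j₂ → Disjoint (G j₁) (G j₂) := by
  rintro ⟨G, hGmem, hdisj⟩
  set P := Finset.Icc 1 (p + 1) with hPdef
  have hget : ∀ j, ∃ H, H ∈ F ∧ H ∩ P = B ∪ {i j} ∧ H \ P = G j := by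
    intro j
    have := hGmem j
    simp only [Finset.mem_image, Finset.mem_filter] at this
    obtain ⟨H, ⟨h1, h2⟩, h3⟩ := this
    exact ⟨H, h1, h2, h3⟩
  choose H hHF hHint hHG using hget
  have hHcard : ∀ j, (H j).card = k := fun j =>
    (Finset.mem_powersetCard.mp (hF (hHF j))).2
  have hiB : ∀ j, i j ∈ P ∧ i j ∉ B := fun j => Finset.mem_sdiff.mp (hi j)
  have hBi : ∀ j, (B ∪ {i j}).card = r := by
    intro j
    rw [Finset.card_union_of_disjoint (Finset.disjoint_singleton_right.mpr (hiB j).2),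
      hBcard, Finset.card_singleton]
    omega
  have hGcard : ∀ j, (G j).card = k - r := by
    intro j
    have := Finset.card_sdiff_add_card_inter (H j) P
    rw [hHG j, hHint j, hBi j, hHcard j] at this
    omega
  have hGsub : ∀ j, G j ⊆ Finset.univ.sup H := by
    intro j
    rw [← hHG j]
    exact (Finset.sdiff_subset).trans (Finset.le_sup (Finset.mem_univ j))
  have hPsub : P ⊆ Finset.univ.sup H := by
    intro x hx
    by_cases hxB : x ∈ B
    · have : x ∈ H 0 ∩ P := by
        rw [hHint 0]
        exact Finset.mem_union_left _ hxB
      exact Finset.mem_of_subset (Finset.le_sup (Finset.mem_univ (0 : Fin (s + 1))))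
        (Finset.mem_of_mem_inter_left this)
    · have hx' : x ∈ Finset.image i Finset.univ := by
        rw [hcover]; exact Finset.mem_sdiff.mpr ⟨hx, hxB⟩
      obtain ⟨j, _, hj⟩ := Finset.mem_image.mp hx'
      have : x ∈ H j ∩ P := by
        rw [hHint j]
        exact Finset.mem_union_right _ (by simp [← hj])
      exact Finset.mem_of_subset (Finset.le_sup (Finset.mem_univ j))
        (Finset.mem_of_mem_inter_left this)
  have hGnotP : ∀ j, Disjoint P (G j) := by
    intro j
    rw [← hHG j]
    exact Finset.disjoint_sdiff
  have hbigsub : P ∪ Finset.univ.biUnion G ⊆ Finset.univ.sup H := by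
    apply Finset.union_subset hPsub
    exact Finset.biUnion_subset.mpr fun j _ => hGsub j
  have hdisjPB : Disjoint P (Finset.univ.biUnion G) :=
    Finset.disjoint_biUnion_right _ _ _ |>.mpr fun j _ => hGnotP j
  have hcardBU : (Finset.univ.biUnion G).card = (s + 1) * (k - r) := by
    rw [Finset.card_biUnion (fun j _ j' _ hjj => hdisj j j' hjj)]
    simp [hGcard, Finset.sum_const]
  have hcardP : P.card = p + 1 := by
    rw [hPdef, Nat.card_Icc]
    omega
  have hlow : p + 1 + (s + 1) * (k - r) ≤ (Finset.univ.sup H).card := by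
    calc p + 1 + (s + 1) * (k - r)
        = (P ∪ Finset.univ.biUnion G).card := by
          rw [Finset.card_union_of_disjoint hdisjPB, hcardP, hcardBU]
      _ ≤ (Finset.univ.sup H).card := Finset.card_le_card hbigsub
  have hup : (Finset.univ.sup H).card ≤ q := hU H hHF
  rw [hq, mul_comm] at hup
  omega
end
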